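/- arXiv:1805.05761 — 3 statements merged into one kernel-verified Lean document; each statement's English description precedes it below -/
import Mathlib

section
/- Let n ≥ 1, let 1 ≤ j ≤ i ≤ m ≤ n, and let λ ∈ Γ_m ⊂ ℝ^n. Then (S_j(λ)/C(n,j))^{1/j} ≥ (S_i(λ)/C(n,i))^{1/i}, where C(n,j) denotes the binomial coefficient 'n choose j'. (Maclaurin's inequality I.) -/
open Finset

/-- The `m`-th elementary symmetric polynomial of `lam : Fin n → ℝ`. -/
noncomputable def esymmS (n m : ℕ) (lam : Fin n → ℝ) : ℝ :=
  ∑ s ∈ Finset.univ.powersetCard m, ∏ i ∈ s, lam i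

/-- The Gårding cone `Γ_m ⊆ ℝ^n`. -/
def GammaCone (n m : ℕ) (lam : Fin n → ℝ) : Prop :=
  ∀ j : ℕ, 1 ≤ j → j ≤ m → 0 < esymmS n j lam

open Polynomial

lemma esymmS_zero (n : ℕ) (f : Fin n → ℝ) : esymmS n 0 f = 1 := by
  simp [esymmS]

lemma esymmS_self (n : ℕ) (f : Fin n → ℝ) : esymmS n n f = ∏ i, f i := by
  have h : (Finset.univ : Finset (Fin n)).powersetCard n = {Finset.univ} := by
    have := Finset.powersetCard_self (Finset.univ : Finset (Fin n))
    simpa using this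
  simp [esymmS, h]

lemma esymmS_coeff (n j : ℕ) (hj : j ≤ n) (f : Fin n → ℝ) :
    (∏ i : Fin n, (X + C (f i))).coeff (n - j) = esymmS n j f := by
  rw [Finset.prod_X_add_C_coeff _ _ (by simpa using Nat.sub_le n j)]
  simp [esymmS, Nat.sub_sub_self hj]

lemma choose_id (d j : ℕ) (hj : j ≤ d) :
    (d + 1 - j) * (d + 1).choose j = (d + 1) * d.choose j := by
  cases j with
  | zero => simp
  | succ k =>
    have h1 := Nat.add_one_mul_choose_eq d (k + 1)
    have h2 := Nat.choose_succ_right_eq (d + 1) (k + 1)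
    calc (d + 1 - (k + 1)) * (d + 1).choose (k + 1)
        = (d + 1).choose (k + 1) * (d + 1 - (k + 1)) := Nat.mul_comm _ _
      _ = (d + 1).choose (k + 1 + 1) * (k + 1 + 1) := h2.symm
      _ = (d + 1) * d.choose (k + 1) := h1.symm

lemma esymmS_inv (d : ℕ) (μ : Fin d → ℝ) (h : ∀ i, μ i ≠ 0) (j : ℕ) (hj : j ≤ d) :
    esymmS d j (fun i => (μ i)⁻¹) * (∏ i, μ i) = esymmS d (d - j) μ := by
  unfold esymmS
  rw [Finset.sum_mul]
  refine Finset.sum_bij' (fun s _ => sᶜ) (fun s _ => sᶜ) ?_ ?_ ?_ ?_ ?_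
  · intro s hs
    rw [Finset.mem_powersetCard_univ] at hs ⊢
    rw [Finset.card_compl, hs]; simp
  · intro s hs
    rw [Finset.mem_powersetCard_univ] at hs ⊢
    rw [Finset.card_compl, hs]; simp; omega
  · intro s _; simp
  · intro s _; simp
  · intro s hs
    rw [← Finset.prod_mul_prod_compl s μ, ← mul_assoc, ← Finset.prod_mul_distrib]
    rw [Finset.prod_congr rfl (fun i _ => inv_mul_cancel₀ (h i)), Finset.prod_const_one, one_mul]

lemma multiset_exists_fn {d : ℕ} (s : Multiset ℝ) (h : Multiset.card s = d) :
    ∃ g : Fin d → ℝ, s = ↑(List.ofFn g) := by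
  obtain ⟨l, rfl⟩ := s.exists_rep
  have h' : l.length = d := by simpa using h
  subst h'
  exact ⟨l.get, by simp [List.ofFn_get]⟩

lemma dstep (d : ℕ) (μ : Fin (d + 1) → ℝ) :
    ∃ ν : Fin d → ℝ, ∀ j ≤ d,
      esymmS d j ν / (d.choose j : ℝ) = esymmS (d + 1) j μ / ((d + 1).choose j : ℝ) := by
  set p : ℝ[X] := ∏ i : Fin (d + 1), (X + C (μ i)) with hp
  have hmonic : p.Monic := monic_prod_of_monic _ _ fun i _ => monic_X_add_C _
  have hdeg : p.natDegree = d + 1 := by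
    rw [hp, natDegree_prod _ _ fun i _ => (monic_X_add_C _).ne_zero]
    simp [natDegree_X_add_C]
  set q := derivative p with hq
  have hqdeg : q.degree = ((d : ℕ) : WithBot ℕ) := by
    have := degree_derivative_eq p (by omega)
    rwa [hdeg, Nat.add_sub_cancel] at this
  have hqnatdeg : q.natDegree = d := natDegree_eq_of_degree_eq_some hqdeg
  have hcardp : Multiset.card p.roots = d + 1 := by
    rw [← hdeg]
    exact (splits_iff_card_roots.mp (Splits.prod fun i _ =>
      Splits.X_add_C _))
  have hcard2 : Multiset.card q.roots = d := by
    have h1 := card_roots' q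
    have h2 := card_roots_le_derivative p
    rw [← hq] at h2
    rw [hcardp] at h2
    rw [hqnatdeg] at h1
    omega
  have hlc : q.leadingCoeff = ((d : ℝ) + 1) := by
    rw [leadingCoeff, hqnatdeg, hq, coeff_derivative]
    have h1 : p.coeff (d + 1) = 1 := by
      have := hmonic.coeff_natDegree
      rwa [hdeg] at this
    rw [h1, one_mul]
  obtain ⟨g, hg⟩ := multiset_exists_fn q.roots hcard2
  have hfact : q = C ((d : ℝ) + 1) * ∏ i : Fin d, (X + C (-(g i))) := by
    have h1 := Splits.eq_prod_roots
      (splits_iff_card_roots.mpr (hcard2.trans hqnatdeg.symm))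
    rw [hlc, hg] at h1
    rw [h1]
    congr 1
    rw [Multiset.map_coe, Multiset.prod_coe, List.map_ofFn, List.prod_ofFn]
    refine Finset.prod_congr rfl fun i _ => ?_
    simp [sub_eq_add_neg]
  refine ⟨fun i => -(g i), fun j hj => ?_⟩
  have hidx : d - j + 1 = d + 1 - j := by omega
  have e1 : q.coeff (d - j) = esymmS (d + 1) j μ * ((d + 1 - j : ℕ) : ℝ) := by
    rw [hq, coeff_derivative, hidx, esymmS_coeff (d + 1) j (by omega) μ]
    norm_cast
    rw [hidx]
  have e2 : q.coeff (d - j) = ((d : ℝ) + 1) * esymmS d j (fun i => -(g i)) := by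
    rw [hfact, coeff_C_mul, esymmS_coeff d j hj (fun i => -(g i))]
  have key : esymmS (d + 1) j μ * ((d + 1 - j : ℕ) : ℝ)
      = ((d : ℝ) + 1) * esymmS d j (fun i => -(g i)) := by
    rw [← e1, ← e2]
  have hc1 : ((d.choose j : ℕ) : ℝ) ≠ 0 := by
    exact_mod_cast (Nat.choose_pos hj).ne'
  have hc2 : (((d + 1).choose j : ℕ) : ℝ) ≠ 0 := by
    exact_mod_cast (Nat.choose_pos (by omega : j ≤ d + 1)).ne'
  rw [div_eq_div_iff hc1 hc2]
  have hcid : ((d + 1 - j : ℕ) : ℝ) * (((d + 1).choose j : ℕ) : ℝ)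
      = ((d : ℝ) + 1) * ((d.choose j : ℕ) : ℝ) := by
    exact_mod_cast choose_id d j hj
  apply mul_right_cancel₀ (show ((d : ℝ) + 1) ≠ 0 by positivity)
  linear_combination (esymmS (d + 1) j μ) * hcid - (((d + 1).choose j : ℕ) : ℝ) * key

lemma dchain (e : ℕ) : ∀ N : ℕ, e ≤ N → ∀ μ : Fin N → ℝ,
    ∃ ν : Fin e → ℝ, ∀ j ≤ e,
      esymmS e j ν / (e.choose j : ℝ) = esymmS N j μ / (N.choose j : ℝ) := by
  intro N
  induction N with
  | zero =>
    intro h μ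
    have he : e = 0 := Nat.le_zero.mp h
    subst he
    exact ⟨μ, fun j _ => rfl⟩
  | succ N ih =>
    intro h μ
    rcases eq_or_lt_of_le h with rfl | h'
    · exact ⟨μ, fun j _ => rfl⟩
    · have he : e ≤ N := by omega
      obtain ⟨ν', hν'⟩ := dstep N μ
      obtain ⟨ν, hν⟩ := ih he ν'
      exact ⟨ν, fun j hj => (hν j hj).trans (hν' j (hj.trans he))⟩

lemma esymmS_one (n : ℕ) (f : Fin n → ℝ) : esymmS n 1 f = ∑ i, f i := by
  rw [esymmS, Finset.powersetCard_one, Finset.sum_map]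
  simp

set_option maxHeartbeats 1000000 in
lemma newton_generic (n k : ℕ) (hk : 1 ≤ k) (hkn : k + 1 ≤ n) (lam : Fin n → ℝ)
    (hS : esymmS n (k + 1) lam ≠ 0) :
    esymmS n (k - 1) lam * esymmS n (k + 1) lam * ((n.choose k : ℝ))^2 ≤
      (esymmS n k lam)^2 * ((n.choose (k - 1) : ℝ) * (n.choose (k + 1) : ℝ)) := by
  obtain ⟨μ, hμ⟩ := dchain (k + 1) n hkn lam
  have hCa : (0 : ℝ) < (n.choose (k - 1) : ℝ) := by
    exact_mod_cast Nat.choose_pos (by omega)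
  have hCb : (0 : ℝ) < (n.choose k : ℝ) := by
    exact_mod_cast Nat.choose_pos (by omega)
  have hCc : (0 : ℝ) < (n.choose (k + 1) : ℝ) := by
    exact_mod_cast Nat.choose_pos hkn
  have hD2 : (0 : ℝ) < ((k + 1).choose 2 : ℝ) := by
    exact_mod_cast Nat.choose_pos (by omega)
  have hk1 : (0 : ℝ) < ((k + 1 : ℕ) : ℝ) := by positivity
  -- top coefficient
  have htop : esymmS (k + 1) (k + 1) μ = esymmS n (k + 1) lam / (n.choose (k + 1) : ℝ) := by
    have h := hμ (k + 1) le_rfl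
    rw [Nat.choose_self] at h
    simpa using h
  have m7 : (∏ i, μ i) * (n.choose (k + 1) : ℝ) = esymmS n (k + 1) lam := by
    rw [← esymmS_self (k + 1) μ, htop]
    field_simp
  have hprod : (∏ i, μ i) ≠ 0 := by
    rw [← esymmS_self (k + 1) μ, htop]
    exact div_ne_zero hS hCc.ne'
  have hne : ∀ i, μ i ≠ 0 := fun i hi =>
    hprod (Finset.prod_eq_zero (Finset.mem_univ i) hi)
  -- inversion
  have m3 : esymmS (k + 1) 1 (fun i => (μ i)⁻¹) * (∏ i, μ i) = esymmS (k + 1) k μ := by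
    have h := esymmS_inv (k + 1) μ hne 1 (by omega)
    rwa [show k + 1 - 1 = k by omega] at h
  have m4 : esymmS (k + 1) 2 (fun i => (μ i)⁻¹) * (∏ i, μ i) = esymmS (k + 1) (k - 1) μ := by
    have h := esymmS_inv (k + 1) μ hne 2 (by omega)
    rwa [show k + 1 - 2 = k - 1 by omega] at h
  -- chain down to 2 variables
  obtain ⟨ρ, hρ⟩ := dchain 2 (k + 1) (by omega) (fun i => (μ i)⁻¹)
  have hρ1 := hρ 1 (by omega)
  have hρ2 := hρ 2 le_rfl
  rw [show (2 : ℕ).choose 1 = 2 from rfl, Nat.choose_one_right] at hρ1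
  rw [Nat.choose_self] at hρ2
  have m1 : esymmS 2 1 ρ * ((k + 1 : ℕ) : ℝ) = esymmS (k + 1) 1 (fun i => (μ i)⁻¹) * 2 := by
    rw [div_eq_div_iff (by norm_num) hk1.ne'] at hρ1
    exact_mod_cast hρ1
  have m2 : esymmS 2 2 ρ * ((k + 1).choose 2 : ℝ) = esymmS (k + 1) 2 (fun i => (μ i)⁻¹) := by
    rw [Nat.cast_one, div_one, eq_div_iff hD2.ne'] at hρ2
    exact hρ2
  -- quadratic inequality
  have ineq : 4 * esymmS 2 2 ρ ≤ (esymmS 2 1 ρ)^2 := by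
    rw [esymmS_one, esymmS_self, Fin.sum_univ_two, Fin.prod_univ_two]
    nlinarith [sq_nonneg (ρ 0 - ρ 1)]
  -- middle and low coefficients
  have hB := hμ k (by omega)
  have hA := hμ (k - 1) (by omega)
  rw [Nat.choose_succ_self_right] at hB
  rw [show (k + 1).choose (k - 1) = (k + 1).choose 2 from by
    rw [show k - 1 = (k + 1) - 2 by omega]; exact Nat.choose_symm (by omega)] at hA
  have m5 : esymmS (k + 1) k μ * (n.choose k : ℝ) = esymmS n k lam * ((k + 1 : ℕ) : ℝ) := by
    rw [div_eq_div_iff hk1.ne' hCb.ne'] at hB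
    exact hB
  have m6 : esymmS (k + 1) (k - 1) μ * (n.choose (k - 1) : ℝ)
      = esymmS n (k - 1) lam * ((k + 1).choose 2 : ℝ) := by
    rw [div_eq_div_iff hD2.ne' hCa.ne'] at hA
    exact hA
  -- abbreviations
  set A := esymmS n (k - 1) lam
  set B := esymmS n k lam
  set Cq := esymmS n (k + 1) lam
  set Cna := (n.choose (k - 1) : ℝ)
  set Cnk := (n.choose k : ℝ)
  set Cnc := (n.choose (k + 1) : ℝ)
  set D2 := ((k + 1).choose 2 : ℝ)
  set K1 := ((k + 1 : ℕ) : ℝ)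
  set P := (∏ i, μ i)
  set R1 := esymmS 2 1 ρ
  set R2 := esymmS 2 2 ρ
  set T1 := esymmS (k + 1) 1 (fun i => (μ i)⁻¹)
  set T2 := esymmS (k + 1) 2 (fun i => (μ i)⁻¹)
  set Sk := esymmS (k + 1) k μ
  set Sk1 := esymmS (k + 1) (k - 1) μ
  -- derivation
  have i1 : R2 * K1^2 ≤ T1^2 := by
    have hsq : R1^2 * K1^2 = 4 * T1^2 := by
      linear_combination (R1 * K1 + 2 * T1) * m1
    linarith [mul_le_mul_of_nonneg_right ineq (sq_nonneg K1), hsq]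
  have i2 : R2 * K1^2 * P^2 ≤ Sk^2 := by
    have hsq : T1^2 * P^2 = Sk^2 := by
      linear_combination (T1 * P + Sk) * m3
    linarith [mul_le_mul_of_nonneg_right i1 (sq_nonneg P), hsq]
  have i3 : R2 * P^2 * Cnk^2 ≤ B^2 := by
    have hsq : Sk^2 * Cnk^2 = B^2 * K1^2 := by
      linear_combination (Sk * Cnk + B * K1) * m5
    have h1 := mul_le_mul_of_nonneg_right i2 (sq_nonneg Cnk)
    have h2 : (R2 * P^2 * Cnk^2) * K1^2 ≤ B^2 * K1^2 := by linarith [h1, hsq]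
    exact le_of_mul_le_mul_right h2 (by positivity)
  have i4 : A * P * Cnk^2 ≤ B^2 * Cna := by
    have h1 := mul_le_mul_of_nonneg_right i3 (mul_nonneg hCa.le hD2.le)
    have h2 : R2 * P^2 * Cnk^2 * (Cna * D2) = (A * P * Cnk^2) * D2 := by
      linear_combination (P^2 * Cnk^2 * Cna) * m2 + (P * Cnk^2 * Cna) * m4
        + (P * Cnk^2) * m6
    have h3 : (A * P * Cnk^2) * D2 ≤ (B^2 * Cna) * D2 := by linarith [h1, h2]
    exact le_of_mul_le_mul_right h3 hD2
  have h1 := mul_le_mul_of_nonneg_right i4 hCc.le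
  have h2 : A * Cq * Cnk^2 = A * P * Cnk^2 * Cnc := by
    linear_combination (A * Cnk^2) * m7.symm
  linarith [h1, h2]

lemma newtonS (n k : ℕ) (hk : 1 ≤ k) (hkn : k + 1 ≤ n) (lam : Fin n → ℝ) :
    esymmS n (k - 1) lam * esymmS n (k + 1) lam * ((n.choose k : ℝ))^2 ≤
      (esymmS n k lam)^2 * ((n.choose (k - 1) : ℝ) * (n.choose (k + 1) : ℝ)) := by
  set Q : ℕ → ℝ[X] := fun j => ∑ s ∈ Finset.univ.powersetCard j, ∏ i ∈ s, (X + C (lam i))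
    with hQ
  have hev : ∀ (j : ℕ) (t : ℝ), (Q j).eval t = esymmS n j (fun i => lam i + t) := by
    intro j t
    rw [hQ]
    simp only [eval_finset_sum, eval_prod, eval_add, eval_X, eval_C, esymmS]
    refine Finset.sum_congr rfl fun s _ => Finset.prod_congr rfl fun i _ => add_comm _ _
  have hQne : Q (k + 1) ≠ 0 := by
    intro h0
    have hco : (Q (k + 1)).coeff (k + 1) = (n.choose (k + 1) : ℝ) := by
      rw [hQ]
      simp only [finset_sum_coeff]
      rw [Finset.sum_congr rfl (fun s hs => ?_), Finset.sum_const, nsmul_eq_mul, mul_one,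
        Finset.card_powersetCard, Finset.card_univ, Fintype.card_fin]
      have hcard : s.card = k + 1 := (Finset.mem_powersetCard_univ.mp hs)
      have hm : (∏ i ∈ s, (X + C (lam i))).Monic :=
        monic_prod_of_monic _ _ fun i _ => monic_X_add_C _
      have hdeg : (∏ i ∈ s, (X + C (lam i))).natDegree = k + 1 := by
        rw [natDegree_prod _ _ fun i _ => (monic_X_add_C _).ne_zero]
        simp [natDegree_X_add_C, hcard]
      rw [← hdeg]
      exact hm.coeff_natDegree
    rw [h0] at hco
    simp only [coeff_zero] at hco
    have := Nat.choose_pos hkn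
    exact absurd hco.symm (by positivity)
  set G : ℝ[X] := C ((n.choose (k - 1) : ℝ) * (n.choose (k + 1) : ℝ)) * (Q k)^2
      - C ((n.choose k : ℝ)^2) * (Q (k - 1) * Q (k + 1)) with hG
  have hGt : ∀ t : ℝ, ¬ (Q (k + 1)).IsRoot t → 0 ≤ G.eval t := by
    intro t ht
    have hnz : esymmS n (k + 1) (fun i => lam i + t) ≠ 0 := by
      rw [← hev]; exact ht
    have hN := newton_generic n k hk hkn (fun i => lam i + t) hnz
    rw [hG]
    simp only [eval_sub, eval_mul, eval_C, eval_pow, hev]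
    linarith [hN]
  have hsub : {t : ℝ | ¬ (Q (k + 1)).IsRoot t} ⊆ {t : ℝ | 0 ≤ G.eval t} := fun t ht => hGt t ht
  have hdense : Dense {t : ℝ | ¬ (Q (k + 1)).IsRoot t} := by
    have hfin : Set.Finite {t : ℝ | (Q (k + 1)).IsRoot t} :=
      Polynomial.finite_setOf_isRoot hQne
    have := hfin.countable.dense_compl (𝕜 := ℝ)
    simpa [Set.compl_setOf] using this
  have hclosed : IsClosed {t : ℝ | 0 ≤ G.eval t} :=
    isClosed_le continuous_const G.continuous
  have hall : ∀ t : ℝ, 0 ≤ G.eval t := by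
    intro t
    have h1 : closure {t : ℝ | ¬ (Q (k + 1)).IsRoot t} ⊆ {t : ℝ | 0 ≤ G.eval t} :=
      closure_minimal hsub hclosed
    have h2 := hdense.closure_eq
    have : t ∈ closure {t : ℝ | ¬ (Q (k + 1)).IsRoot t} := by rw [h2]; trivial
    exact h1 this
  have h0 := hall 0
  rw [hG] at h0
  simp only [eval_sub, eval_mul, eval_C, eval_pow, hev] at h0
  have hlam0 : (fun i => lam i + (0:ℝ)) = lam := by funext i; simp
  rw [hlam0] at h0
  linarith [h0]

lemma newtonP (n k : ℕ) (hk : 1 ≤ k) (hkn : k + 1 ≤ n) (lam : Fin n → ℝ) :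
    (esymmS n (k - 1) lam / (n.choose (k - 1) : ℝ)) *
      (esymmS n (k + 1) lam / (n.choose (k + 1) : ℝ)) ≤
        (esymmS n k lam / (n.choose k : ℝ))^2 := by
  have h := newtonS n k hk hkn lam
  have hCa : (0 : ℝ) < (n.choose (k - 1) : ℝ) := by
    exact_mod_cast Nat.choose_pos (by omega)
  have hCb : (0 : ℝ) < (n.choose k : ℝ) := by
    exact_mod_cast Nat.choose_pos (by omega)
  have hCc : (0 : ℝ) < (n.choose (k + 1) : ℝ) := by
    exact_mod_cast Nat.choose_pos hkn
  rw [div_mul_div_comm, div_pow, div_le_div_iff₀ (by positivity) (by positivity)]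
  linarith [h]

lemma pow_step (n m : ℕ) (hmn : m ≤ n) (lam : Fin n → ℝ)
    (hlam : ∀ j : ℕ, 1 ≤ j → j ≤ m → 0 < esymmS n j lam) :
    ∀ k : ℕ, 1 ≤ k → k + 1 ≤ m →
      (esymmS n (k + 1) lam / (n.choose (k + 1) : ℝ))^k ≤
        (esymmS n k lam / (n.choose k : ℝ))^(k + 1) := by
  have hp : ∀ j : ℕ, 1 ≤ j → j ≤ m → 0 < esymmS n j lam / (n.choose j : ℝ) := by
    intro j h1 h2
    exact div_pos (hlam j h1 h2) (by exact_mod_cast Nat.choose_pos (h2.trans hmn))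
  intro k
  induction k with
  | zero => intro h; omega
  | succ k ih =>
    intro _ hm
    rcases Nat.eq_zero_or_pos k with rfl | hk1
    · -- base case k = 1 overall
      have hN := newtonP n 1 le_rfl (by omega) lam
      have h0 : esymmS n (1 - 1) lam / (n.choose (1 - 1) : ℝ) = 1 := by
        norm_num [esymmS_zero]
      rw [h0, one_mul] at hN
      simpa using hN
    · have ihh := ih hk1 (by omega)
      have hN := newtonP n (k + 1) (by omega) (by omega : (k + 1) + 1 ≤ n) lam
      rw [show k + 1 - 1 = k by omega] at hN
      set X := esymmS n (k + 2) lam / (n.choose (k + 2) : ℝ) with hX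
      set Y := esymmS n (k + 1) lam / (n.choose (k + 1) : ℝ) with hY
      set Z := esymmS n k lam / (n.choose k : ℝ) with hZ
      have hXp : 0 < X := hp (k + 2) (by omega) hm
      have hYp : 0 < Y := hp (k + 1) (by omega) (by omega)
      have hZp : 0 < Z := hp k hk1 (by omega)
      -- hN : Z * X ≤ Y ^ 2, ihh : Y ^ k ≤ Z ^ (k + 1)
      -- goal : X ^ (k + 1) ≤ Y ^ (k + 2)
      have t1 : (X * Z)^(k + 1) ≤ (Y^2)^(k + 1) :=
        pow_le_pow_left₀ (by positivity) (by linarith [hN]) (k + 1)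
      have t2 : (Y^2)^(k+1) = Y^(k+2) * Y^k := by ring
      have t3 : Y^(k+2) * Y^k ≤ Y^(k+2) * Z^(k+1) :=
        mul_le_mul_of_nonneg_left ihh (by positivity)
      have t4 : X^(k+1) * Z^(k+1) ≤ Y^(k+2) * Z^(k+1) := by
        calc X^(k+1) * Z^(k+1) = (X * Z)^(k+1) := by rw [mul_pow]
          _ ≤ (Y^2)^(k+1) := t1
          _ = Y^(k+2) * Y^k := t2
          _ ≤ Y^(k+2) * Z^(k+1) := t3
      exact le_of_mul_le_mul_right t4 (by positivity)

lemma rpow_aux (x y : ℝ) (hx : 0 < x) (hy : 0 < y) (a b : ℕ) (ha : 0 < a) (hb : 0 < b)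
    (h : x ^ a ≤ y ^ b) : x ^ ((1 : ℝ) / (b : ℝ)) ≤ y ^ ((1 : ℝ) / (a : ℝ)) := by
  have haR : (0:ℝ) < (a : ℝ) := by exact_mod_cast ha
  have hbR : (0:ℝ) < (b : ℝ) := by exact_mod_cast hb
  have h' : (x ^ a : ℝ) ^ ((1:ℝ)/((a:ℝ)*(b:ℝ))) ≤ (y ^ b : ℝ) ^ ((1:ℝ)/((a:ℝ)*(b:ℝ))) :=
    Real.rpow_le_rpow (by positivity) h (by positivity)
  rw [← Real.rpow_natCast x a, ← Real.rpow_natCast y b, ← Real.rpow_mul hx.le,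
    ← Real.rpow_mul hy.le] at h'
  have e1 : (a : ℝ) * ((1:ℝ)/((a:ℝ)*(b:ℝ))) = (1:ℝ)/(b:ℝ) := by
    field_simp
  have e2 : (b : ℝ) * ((1:ℝ)/((a:ℝ)*(b:ℝ))) = (1:ℝ)/(a:ℝ) := by
    field_simp
  rwa [e1, e2] at h'

/-- Maclaurin's inequality I. -/
theorem maclaurin_I (n : ℕ) (hn : 1 ≤ n) (j i m : ℕ)
    (hj : 1 ≤ j) (hji : j ≤ i) (him : i ≤ m) (hmn : m ≤ n)
    (lam : Fin n → ℝ) (hlam : GammaCone n m lam) :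
    (esymmS n i lam / (n.choose i : ℝ)) ^ ((1 : ℝ) / (i : ℝ)) ≤
      (esymmS n j lam / (n.choose j : ℝ)) ^ ((1 : ℝ) / (j : ℝ)) := by
  have hp : ∀ l : ℕ, 1 ≤ l → l ≤ m → 0 < esymmS n l lam / (n.choose l : ℝ) := by
    intro l h1 h2
    exact div_pos (hlam l h1 h2) (by exact_mod_cast Nat.choose_pos (h2.trans hmn))
  have main : ∀ i' : ℕ, j ≤ i' → i' ≤ m →
      (esymmS n i' lam / (n.choose i' : ℝ)) ^ ((1 : ℝ) / (i' : ℝ)) ≤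
        (esymmS n j lam / (n.choose j : ℝ)) ^ ((1 : ℝ) / (j : ℝ)) := by
    intro i' hji'
    induction i', hji' using Nat.le_induction with
    | base => intro _; exact le_rfl
    | succ i' hji' ih =>
      intro him'
      have step := pow_step n m hmn lam hlam i' (by omega) him'
      have hXp : 0 < esymmS n (i' + 1) lam / (n.choose (i' + 1) : ℝ) :=
        hp (i' + 1) (by omega) him'
      have hYp : 0 < esymmS n i' lam / (n.choose i' : ℝ) :=
        hp i' (by omega) (by omega)
      have h1 := rpow_aux _ _ hXp hYp i' (i' + 1) (by omega) (by omega) step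
      exact h1.trans (ih (by omega))
  exact main i hji him
end

section
/- For every 1 ≤ m ≤ n, the Gårding cone Γ_m ⊂ ℝ^n is a convex cone: if λ, μ ∈ Γ_m and s, t > 0, then sλ + tμ ∈ Γ_m. In particular Γ_m is a convex subset of ℝ^n. -/
open Finset

/-- `σ_m(λ|i)`: the `m`-th elementary symmetric polynomial of `λ` with the `i`-th entry deleted. -/
noncomputable def esymmDel (n m : ℕ) (lam : Fin n → ℝ) (i : Fin n) : ℝ :=
  ∑ s ∈ (Finset.univ.erase i).powersetCard m, ∏ l ∈ s, lam l

/-- `σ_m(λ|ij)`: the `m`-th elementary symmetric polynomial of `λ` with the `i`-th and `j`-th entries deleted. -/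
noncomputable def esymmDel2 (n m : ℕ) (lam : Fin n → ℝ) (i j : Fin n) : ℝ :=
  ∑ s ∈ ((Finset.univ.erase i).erase j).powersetCard m, ∏ l ∈ s, lam l

namespace GardingAux

open Polynomial


/-- the monic polynomial with roots `-x i` -/
noncomputable def Px {n : ℕ} (x : Fin n → ℝ) : Polynomial ℝ :=
  ∏ i ∈ Finset.univ, (X + C (x i))

lemma Px_monic {n : ℕ} (x : Fin n → ℝ) : (Px x).Monic :=
  monic_prod_of_monic _ _ (fun i _ => monic_X_add_C (x i))

lemma Px_natDegree {n : ℕ} (x : Fin n → ℝ) : (Px x).natDegree = n := by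
  rw [Px, natDegree_prod _ _ (fun i _ => (monic_X_add_C (x i)).ne_zero)]
  simp [natDegree_X_add_C]

lemma Px_coeff {n : ℕ} (x : Fin n → ℝ) {j : ℕ} (hj : j ≤ n) :
    (Px x).coeff (n - j) = esymmS n j x := by
  rw [Px, esymmS]
  have h : n - j ≤ #(Finset.univ : Finset (Fin n)) := by
    rw [Finset.card_univ, Fintype.card_fin]; omega
  rw [Finset.prod_X_add_C_coeff _ _ h]
  congr 1
  rw [Finset.card_univ, Fintype.card_fin]
  congr 1
  omega

lemma Px_splits {n : ℕ} (x : Fin n → ℝ) : (Px x).Splits :=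
  Splits.prod (fun i _ => Splits.of_natDegree_le_one (by simp [natDegree_X_add_C]))

lemma splits_derivative {p : Polynomial ℝ} (h : p.Splits) :
    (derivative p).Splits := by
  by_cases hd : p.natDegree = 0
  · rw [Polynomial.eq_C_of_natDegree_eq_zero hd]
    simp
  · have h1 : Multiset.card p.roots = p.natDegree := (splits_iff_card_roots).mp h
    have h2 := p.card_roots_le_derivative
    have hd0 : derivative p ≠ 0 := by
      intro hc
      exact hd (natDegree_eq_zero_of_derivative_eq_zero hc)
    have h3 : Multiset.card (derivative p).roots ≤ (derivative p).natDegree :=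
      (derivative p).card_roots' 
    have h4 : (derivative p).natDegree < p.natDegree := natDegree_derivative_lt hd
    rw [splits_iff_card_roots]
    omega

lemma splits_of_nsmul {c : ℕ} (hc : c ≠ 0) {q : Polynomial ℝ}
    (h : (c • q).Splits) : q.Splits := by
  have e : q = C ((c : ℝ)⁻¹) * (c • q) := by
    rw [← Nat.cast_smul_eq_nsmul ℝ c q, smul_eq_C_mul, ← mul_assoc, ← C_mul,
      inv_mul_cancel₀ (by exact_mod_cast hc), C_1, one_mul]
  rw [e]
  exact h.C_mul _

lemma splits_hasseDeriv {p : Polynomial ℝ} (k : ℕ) (h : p.Splits) :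
    (hasseDeriv k p).Splits := by
  induction k generalizing p with
  | zero => simpa [hasseDeriv_zero] using h
  | succ k ih =>
    have h1 := LinearMap.congr_fun (hasseDeriv_comp (R := ℝ) k 1) p
    rw [LinearMap.comp_apply, LinearMap.smul_apply, hasseDeriv_one] at h1
    have h2 := ih (p := derivative p) (splits_derivative h)
    rw [h1] at h2
    exact splits_of_nsmul (Nat.choose_pos (by omega)).ne' h2

/-- the key real polynomial: `(n-m)`-th Hasse derivative of `Px`. -/
noncomputable def fm {n : ℕ} (m : ℕ) (x : Fin n → ℝ) : Polynomial ℝ :=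
  hasseDeriv (n - m) (Px x)

lemma fm_splits {n : ℕ} (m : ℕ) (x : Fin n → ℝ) : (fm m x).Splits :=
  splits_hasseDeriv _ (Px_splits x)

lemma fm_coeff {n : ℕ} {m : ℕ} (x : Fin n → ℝ) (hmn : m ≤ n) {k : ℕ} (hk : k ≤ m) :
    (fm m x).coeff k = ((k + (n - m)).choose (n - m)) * esymmS n (m - k) x := by
  rw [fm, hasseDeriv_coeff]
  have e1 : k + (n - m) = n - (m - k) := by omega
  rw [e1, Px_coeff x (by omega)]

lemma fm_coeff_zero {n : ℕ} {m : ℕ} (x : Fin n → ℝ) (hmn : m ≤ n) :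
    (fm m x).coeff 0 = esymmS n m x := by
  rw [fm_coeff x hmn (Nat.zero_le m)]
  simp

lemma fm_natDegree_le {n : ℕ} (m : ℕ) (x : Fin n → ℝ) (hmn : m ≤ n) :
    (fm m x).natDegree ≤ m := by
  have := natDegree_hasseDeriv_le (Px x) (n - m)
  rw [Px_natDegree] at this
  rw [fm]
  omega

lemma fm_eval {n : ℕ} {m : ℕ} (x : Fin n → ℝ) (hmn : m ≤ n) (s : ℝ) :
    (fm m x).eval s = esymmS n m (fun i => x i + s) := by
  have h1 : (taylor s (Px x)).coeff (n - m) = (fm m x).eval s := taylor_coeff s (Px x) (n - m)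
  rw [← h1, taylor_apply]
  have h2 : (Px x).comp (X + C s) = ∏ i ∈ Finset.univ, (X + C (x i + s)) := by
    rw [Px, Polynomial.prod_comp]
    refine Finset.prod_congr rfl fun i _ => ?_
    rw [add_comp, X_comp, C_comp, C_add]
    ring
  rw [h2]
  have h : n - m ≤ #(Finset.univ : Finset (Fin n)) := by
    rw [Finset.card_univ, Fintype.card_fin]; omega
  rw [Finset.prod_X_add_C_coeff _ _ h]
  rw [esymmS]
  congr 1
  rw [Finset.card_univ, Fintype.card_fin]
  congr 1
  omega

-- complex part


/-- complex elementary symmetric polynomial -/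
noncomputable def SC (n m : ℕ) (a : Fin n → ℂ) : ℂ :=
  ∑ s ∈ Finset.univ.powersetCard m, ∏ i ∈ s, a i

lemma SC_ofReal (x : Fin n → ℝ) :
    SC n m (fun i => (x i : ℂ)) = ((∑ s ∈ Finset.univ.powersetCard m, ∏ i ∈ s, x i : ℝ) : ℂ) := by
  rw [SC]
  push_cast
  rfl

/-- coefficients of `z ↦ SC (a + z b)` -/
noncomputable def cf (n m : ℕ) (j : ℕ) (a b : Fin n → ℂ) : ℂ :=
  ∑ s ∈ Finset.univ.powersetCard m, ∑ u ∈ s.powersetCard j, (∏ i ∈ u, b i) * ∏ i ∈ s \ u, a i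

lemma SC_expand (a b : Fin n → ℂ) (z : ℂ) :
    SC n m (fun i => a i + z * b i) = ∑ j ∈ Finset.range (m + 1), cf n m j a b * z ^ j := by
  rw [SC]
  have h1 : ∀ s ∈ Finset.univ.powersetCard m,
      (∏ i ∈ s, (a i + z * b i)) =
        ∑ j ∈ Finset.range (m + 1), ∑ u ∈ s.powersetCard j,
          ((∏ i ∈ u, b i) * ∏ i ∈ s \ u, a i) * z ^ j := by
    intro s hs
    have hcard : s.card = m := (Finset.mem_powersetCard_univ.mp hs)
    have h2 : (∏ i ∈ s, (z * b i + a i)) =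
        ∑ u ∈ s.powerset, (∏ i ∈ u, (z * b i)) * ∏ i ∈ s \ u, a i :=
      Finset.prod_add _ _ s
    rw [Finset.sum_powerset] at h2
    rw [show (∏ i ∈ s, (a i + z * b i)) = ∏ i ∈ s, (z * b i + a i) by
      exact Finset.prod_congr rfl fun i _ => add_comm _ _]
    rw [h2, hcard]
    refine Finset.sum_congr rfl fun j _ => Finset.sum_congr rfl fun u hu => ?_
    have hucard : u.card = j := (Finset.mem_powersetCard.mp hu).2
    rw [Finset.prod_mul_distrib, Finset.prod_const, hucard]
    ring
  rw [Finset.sum_congr rfl h1, Finset.sum_comm]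
  refine Finset.sum_congr rfl fun j _ => ?_
  rw [cf, Finset.sum_mul]
  exact Finset.sum_congr rfl fun s _ => by rw [Finset.sum_mul]

lemma cf_top (a b : Fin n → ℂ) : cf n m m a b = SC n m b := by
  rw [cf, SC]
  refine Finset.sum_congr rfl fun s hs => ?_
  have hcard : s.card = m := (Finset.mem_powersetCard_univ.mp hs)
  rw [← hcard, Finset.powersetCard_self, Finset.sum_singleton, Finset.sdiff_self]
  simp

/-- the polynomial `z ↦ SC (a + z b)` -/
noncomputable def Qc (n m : ℕ) (a b : Fin n → ℂ) : Polynomial ℂ :=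
  ∑ j ∈ Finset.range (m + 1), Polynomial.C (cf n m j a b) * X ^ j

lemma Qc_eval (a b : Fin n → ℂ) (z : ℂ) :
    (Qc n m a b).eval z = SC n m (fun i => a i + z * b i) := by
  rw [SC_expand, Qc]
  simp [eval_finset_sum]

lemma Qc_coeff (a b : Fin n → ℂ) {j : ℕ} (hj : j ≤ m) : (Qc n m a b).coeff j = cf n m j a b := by
  rw [Qc, finset_sum_coeff]
  simp only [coeff_C_mul, coeff_X_pow, mul_ite, mul_one, mul_zero]
  rw [Finset.sum_ite_eq (Finset.range (m + 1)) j (fun k => cf n m k a b)]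
  simp [Nat.lt_succ_iff, hj]

lemma Qc_natDegree_le (a b : Fin n → ℂ) : (Qc n m a b).natDegree ≤ m := by
  refine natDegree_sum_le_of_forall_le _ _ fun j hj => ?_
  refine (natDegree_C_mul_le _ _).trans ?_
  rw [natDegree_X_pow]
  exact Nat.lt_succ_iff.mp (Finset.mem_range.mp hj)

lemma Qc_natDegree (a b : Fin n → ℂ) (hb : SC n m b ≠ 0) : (Qc n m a b).natDegree = m := by
  refine le_antisymm (Qc_natDegree_le a b) ?_
  apply le_natDegree_of_ne_zero
  rw [Qc_coeff a b (le_refl m), cf_top]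
  exact hb

lemma Qc_ne_zero (a b : Fin n → ℂ) (hb : SC n m b ≠ 0) : Qc n m a b ≠ 0 := by
  intro h
  apply hb
  rw [← cf_top (m := m) a b, ← Qc_coeff a b (le_refl m), h, coeff_zero]

lemma Qc_leadingCoeff (a b : Fin n → ℂ) (hb : SC n m b ≠ 0) :
    (Qc n m a b).leadingCoeff = SC n m b := by
  rw [leadingCoeff, Qc_natDegree a b hb, Qc_coeff a b (le_refl m), cf_top]

lemma Qc_roots_card (a b : Fin n → ℂ) (hb : SC n m b ≠ 0) :
    Multiset.card (Qc n m a b).roots = m := by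
  rw [splits_iff_card_roots.mp (IsAlgClosed.splits _), Qc_natDegree a b hb]

/-- multiset product lower bound -/
lemma ms_pow_le_prod (s : Multiset ℝ) (c : ℝ) (hc : 0 ≤ c) (h : ∀ x ∈ s, c ≤ x) :
    c ^ Multiset.card s ≤ s.prod := by
  induction s using Multiset.induction with
  | empty => simp
  | cons a s ih =>
    rw [Multiset.prod_cons, Multiset.card_cons, pow_succ, mul_comm]
    have ha := h a (Multiset.mem_cons_self a s)
    have hs := ih (fun x hx => h x (Multiset.mem_cons_of_mem hx))
    exact mul_le_mul ha hs (pow_nonneg hc _) (le_trans hc ha)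

lemma abs_ms_prod (s : Multiset ℂ) : ‖s.prod‖ = (s.map fun x => ‖x‖).prod := by
  induction s using Multiset.induction with
  | empty => simp
  | cons a s ih => simp [norm_mul, ih]

/-- key lower bound for evaluations of complex polynomials away from roots -/
lemma eval_lower_bound {p : Polynomial ℂ} (hp : p ≠ 0) (z : ℂ) (c : ℝ) (hc : 0 ≤ c)
    (h : ∀ r ∈ p.roots, c ≤ ‖z - r‖) :
    ‖p.leadingCoeff‖ * c ^ (Multiset.card p.roots) ≤ ‖p.eval z‖ := by
  have e := (IsAlgClosed.splits p).eq_prod_roots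
  have e2 : p.eval z = p.leadingCoeff * ((p.roots.map fun r => z - r).prod) := by
    conv_lhs => rw [e]
    rw [eval_mul, eval_C, eval_multiset_prod, Multiset.map_map]
    congr 2
    refine Multiset.map_congr rfl fun r _ => ?_
    simp
  rw [e2, norm_mul]
  refine mul_le_mul_of_nonneg_left ?_ (norm_nonneg _)
  rw [abs_ms_prod, Multiset.map_map]
  have e4 : Multiset.card p.roots = Multiset.card (p.roots.map fun r => ‖z - r‖) := by
    rw [Multiset.card_map]
  rw [e4]
  refine ms_pow_le_prod _ c hc ?_
  intro y hy
  obtain ⟨r, hr, rfl⟩ := Multiset.mem_map.mp hy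
  exact h r hr

/-- Cauchy bound for roots -/
lemma root_bound {p : Polynomial ℂ} {d : ℕ} (hd : p.natDegree = d) (hd1 : 1 ≤ d) {z : ℂ}
    (hz : p.eval z = 0) :
    ‖z‖ ≤ 1 + (∑ j ∈ Finset.range d, ‖p.coeff j‖) / ‖p.leadingCoeff‖ := by
  have hp : p ≠ 0 := fun h => by simp [h] at hd; omega
  have hL : 0 < ‖p.leadingCoeff‖ := norm_pos_iff.mpr (leadingCoeff_ne_zero.mpr hp)
  set B := ∑ j ∈ Finset.range d, ‖p.coeff j‖ with hB
  have hB0 : 0 ≤ B := Finset.sum_nonneg fun j _ => norm_nonneg _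
  rcases le_or_gt ‖z‖ 1 with h1 | h1
  · nlinarith [div_nonneg hB0 hL.le]
  · have he : p.eval z = ∑ j ∈ Finset.range (d + 1), p.coeff j * z ^ j := by
      rw [eval_eq_sum_range, hd]
    rw [Finset.sum_range_succ] at he
    have he2 : p.coeff d * z ^ d = -∑ j ∈ Finset.range d, p.coeff j * z ^ j := by
      rw [hz] at he
      linear_combination -he
    have hnorm : ‖p.leadingCoeff‖ * ‖z‖ ^ d ≤ B * ‖z‖ ^ (d - 1) := by
      have : ‖p.coeff d * z ^ d‖ ≤ ∑ j ∈ Finset.range d, ‖p.coeff j * z ^ j‖ := by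
        rw [he2, norm_neg]
        exact norm_sum_le _ _
      rw [norm_mul, norm_pow, ← hd, coeff_natDegree, hd] at this
      refine this.trans ?_
      rw [Finset.sum_mul]
      refine Finset.sum_le_sum fun j hj => ?_
      rw [norm_mul, norm_pow]
      refine mul_le_mul_of_nonneg_left ?_ (norm_nonneg _)
      have hjd := Finset.mem_range.mp hj
      exact pow_le_pow_right₀ h1.le (by omega : j ≤ d - 1)
    have hzp : 0 < ‖z‖ ^ (d - 1) := pow_pos (by linarith) _
    have hdd : d = (d - 1) + 1 := by omega
    rw [hdd, pow_succ, ← mul_assoc] at hnorm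
    simp only [Nat.add_sub_cancel] at hnorm
    have h2 : ‖p.leadingCoeff‖ * ‖z‖ ≤ B := by
      refine le_of_mul_le_mul_right ?_ hzp
      calc ‖p.leadingCoeff‖ * ‖z‖ * ‖z‖ ^ (d - 1)
          = ‖p.leadingCoeff‖ * ‖z‖ ^ (d - 1) * ‖z‖ := by ring
        _ ≤ B * ‖z‖ ^ (d - 1) := hnorm
    have h3 : ‖z‖ ≤ B / ‖p.leadingCoeff‖ := (le_div_iff₀ hL).mpr (by linarith [mul_comm ‖z‖ ‖p.leadingCoeff‖])
    linarith
  

lemma esymmS_zero (x : Fin n → ℝ) : esymmS n 0 x = 1 := by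
  simp [esymmS]

lemma esymmS_smul (c : ℝ) (x : Fin n → ℝ) :
    esymmS n m (fun i => c * x i) = c ^ m * esymmS n m x := by
  rw [esymmS, esymmS, Finset.mul_sum]
  refine Finset.sum_congr rfl fun s hs => ?_
  rw [Finset.prod_mul_distrib, Finset.prod_const, Finset.mem_powersetCard_univ.mp hs]

lemma esymmS_const (c : ℝ) : esymmS n m (fun _ => c) = (n.choose m : ℝ) * c ^ m := by
  rw [esymmS]
  rw [Finset.sum_congr rfl (fun s hs => by
    rw [Finset.prod_const, Finset.mem_powersetCard_univ.mp hs])]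
  rw [Finset.sum_const, Finset.card_powersetCard, Finset.card_univ, Fintype.card_fin,
    nsmul_eq_mul]

lemma fm_ne_zero {x : Fin n → ℝ} (hmn : m ≤ n) : fm m x ≠ 0 := by
  intro h
  have hc := fm_coeff x hmn (le_refl m)
  rw [h, coeff_zero, Nat.sub_self, esymmS_zero] at hc
  have : (0:ℝ) < ((m + (n - m)).choose (n - m) : ℝ) := by
    exact_mod_cast Nat.choose_pos (by omega)
  simp only [mul_one] at hc
  linarith [hc ▸ this]

/-- positivity along the `𝟙` ray, from Gårding cone membership -/
lemma rayPos (hm : 1 ≤ m) (hmn : m ≤ n) {x : Fin n → ℝ}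
    (hx : ∀ j, 1 ≤ j → j ≤ m → 0 < esymmS n j x) :
    ∀ s : ℝ, 0 ≤ s → 0 < esymmS n m (fun i => x i + s) := by
  intro s hs
  rw [← fm_eval x hmn]
  rw [eval_eq_sum_range]
  apply Finset.sum_pos'
  · intro k hk
    have hk2 : k ≤ m := le_trans (Nat.lt_succ_iff.mp (Finset.mem_range.mp hk))
      (fm_natDegree_le m x hmn)
    rw [fm_coeff x hmn hk2]
    have hch : (0:ℝ) ≤ ((k + (n - m)).choose (n - m) : ℝ) := by positivity
    have hesym : 0 ≤ esymmS n (m - k) x := by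
      rcases Nat.eq_zero_or_pos (m - k) with h0 | h0
      · rw [h0, esymmS_zero]; norm_num
      · exact (hx (m - k) h0 (by omega)).le
    positivity
  · refine ⟨0, by simp, ?_⟩
    rw [fm_coeff_zero x hmn]
    simpa using (hx m hm (le_refl m))

lemma Qc_one_eq_fm_map (hmn : m ≤ n) (x : Fin n → ℝ) :
    Qc n m (fun i => (x i : ℂ)) (fun _ => 1) = (fm m x).map (algebraMap ℝ ℂ) := by
  apply eq_of_infinite_eval_eq
  refine Set.Infinite.mono ?_ (Set.infinite_range_of_injective Complex.ofReal_injective)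
  rintro z ⟨s, rfl⟩
  show (Qc n m _ _).eval (s : ℂ) = _
  rw [Qc_eval]
  have e1 : (fun i => ((x i : ℂ)) + (s : ℂ) * 1) = fun i => ((x i + s : ℝ) : ℂ) := by
    funext i; push_cast; ring
  rw [e1, SC_ofReal]
  have e2 : (∑ t ∈ Finset.univ.powersetCard m, ∏ i ∈ t, (x i + s))
      = esymmS n m (fun i => x i + s) := rfl
  rw [e2, ← fm_eval x hmn]
  have e3 : ((s : ℂ)) = algebraMap ℝ ℂ s := rfl
  rw [e3, eval_map, eval₂_at_apply]
  rfl

/-- every complex root of `w ↦ S_m(x + w 𝟙)` is real -/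
lemma root_one_dir_real (hmn : m ≤ n) (x : Fin n → ℝ) {w : ℂ}
    (hw : SC n m (fun i => (x i : ℂ) + w) = 0) :
    ∃ r : ℝ, w = (r : ℂ) ∧ esymmS n m (fun i => x i + r) = 0 := by
  have h0 : (Qc n m (fun i => (x i : ℂ)) (fun _ => 1)).eval w = 0 := by
    rw [Qc_eval]
    simpa using hw
  rw [Qc_one_eq_fm_map hmn x] at h0
  have hne : fm m x ≠ 0 := fm_ne_zero hmn
  have hmapne : (fm m x).map (algebraMap ℝ ℂ) ≠ 0 := by
    simpa using (Polynomial.map_ne_zero_iff (algebraMap ℝ ℂ).injective).mpr hne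
  have hmem : w ∈ ((fm m x).map (algebraMap ℝ ℂ)).roots := by
    rw [mem_roots hmapne]
    exact h0
  rw [(fm_splits m x).roots_map] at hmem
  obtain ⟨r, hr, hrw⟩ := Multiset.mem_map.mp hmem
  refine ⟨r, by rw [← hrw]; rfl, ?_⟩
  rw [← fm_eval x hmn]
  exact (mem_roots hne).mp hr

lemma SC_one_ne_zero_of_im (hmn : m ≤ n) (x : Fin n → ℝ) {z : ℂ} (hz : z.im ≠ 0) :
    SC n m (fun i => (x i : ℂ) + z) ≠ 0 := by
  intro h
  obtain ⟨r, rfl, -⟩ := root_one_dir_real hmn x h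
  simp at hz

/-- if `x` is ray-positive, roots of `w ↦ S_m(x + w𝟙)` are negative reals -/
lemma root_one_dir_neg (hmn : m ≤ n) (x : Fin n → ℝ)
    (hx : ∀ s : ℝ, 0 ≤ s → 0 < esymmS n m (fun i => x i + s)) {w : ℂ}
    (hw : SC n m (fun i => (x i : ℂ) + w) = 0) :
    ∃ r : ℝ, w = (r : ℂ) ∧ r < 0 := by
  obtain ⟨r, rfl, hr⟩ := root_one_dir_real hmn x hw
  refine ⟨r, rfl, ?_⟩
  by_contra hge
  push_neg at hge
  exact absurd hr (ne_of_gt (hx r hge))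

lemma SC_mulC (c : ℂ) (a : Fin n → ℂ) : SC n m (fun i => c * a i) = c ^ m * SC n m a := by
  rw [SC, SC, Finset.mul_sum]
  refine Finset.sum_congr rfl fun s hs => ?_
  rw [Finset.prod_mul_distrib, Finset.prod_const, Finset.mem_powersetCard_univ.mp hs]

lemma SC_constC (c : ℂ) : SC n m (fun _ => c) = (n.choose m : ℂ) * c ^ m := by
  rw [SC]
  rw [Finset.sum_congr rfl (fun s hs => by
    rw [Finset.prod_const, Finset.mem_powersetCard_univ.mp hs])]
  rw [Finset.sum_const, Finset.card_powersetCard, Finset.card_univ, Fintype.card_fin,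
    nsmul_eq_mul]

set_option maxHeartbeats 1000000 in
/-- Homotopy lemma -/
lemma L2 (hm : 1 ≤ m) (hmn : m ≤ n) (x v : Fin n → ℝ)
    (hv : ∀ w : ℝ, 0 ≤ w → 0 < esymmS n m (fun i => v i + w)) {t : ℝ} (ht : 0 < t) :
    ∀ τ ∈ Set.Icc (0:ℝ) 1, ∀ z : ℂ, 0 ≤ z.im →
      SC n m (fun i => (τ:ℂ) * (x i:ℂ) + (t:ℂ) * Complex.I + z * (v i:ℂ)) ≠ 0 := by
  set G : ℝ → ℂ → ℂ := fun τ z =>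
    SC n m (fun i => (τ:ℂ) * (x i:ℂ) + (t:ℂ) * Complex.I + z * (v i:ℂ)) with hGdef
  -- positivity of S_m(v)
  have hv0 : 0 < esymmS n m v := by
    have := hv 0 le_rfl
    simpa using this
  have hSv : SC n m (fun i => (v i:ℂ)) = ((esymmS n m v : ℝ) : ℂ) := SC_ofReal v
  have hb : SC n m (fun i => (v i:ℂ)) ≠ 0 := by
    rw [hSv]
    exact_mod_cast hv0.ne'
  -- the polynomial family
  set P : ℝ → Polynomial ℂ := fun τ =>
    Qc n m (fun i => (τ:ℂ) * (x i:ℂ) + (t:ℂ) * Complex.I) (fun i => (v i:ℂ)) with hPdef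
  have hGP : ∀ τ z, (P τ).eval z = G τ z := fun τ z => Qc_eval _ _ z
  have hPlc : ∀ τ : ℝ, ‖(P τ).leadingCoeff‖ = esymmS n m v := by
    intro τ
    rw [Qc_leadingCoeff _ _ hb, hSv]
    simp [abs_of_pos hv0]
  -- real-axis exclusion
  have hreal : ∀ (τ r : ℝ), G τ (r:ℂ) ≠ 0 := by
    intro τ r h
    have him : ((t:ℂ) * Complex.I).im ≠ 0 := by simp [ht.ne']
    refine SC_one_ne_zero_of_im hmn (fun i => τ * x i + r * v i) him ?_
    rw [← h]
    exact congrArg (SC n m) (funext fun i => by push_cast; ring)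
  -- joint continuity
  have hGcont : Continuous (fun p : ℝ × ℂ => G p.1 p.2) := by
    rw [hGdef]
    apply continuous_finset_sum
    intro s _
    apply continuous_finset_prod
    intro i _
    exact (((Complex.continuous_ofReal.comp continuous_fst).mul continuous_const).add
      continuous_const).add (continuous_snd.mul continuous_const)
  -- base case τ = 0
  have h0A : ∀ z : ℂ, 0 ≤ z.im → G 0 z ≠ 0 := by
    intro z hz h
    rcases eq_or_ne z 0 with rfl | hzne
    · have he : G 0 0 = SC n m (fun _ => (t:ℂ) * Complex.I) := by
        exact congrArg (SC n m) (funext fun i => by push_cast; ring)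
      rw [he, SC_constC] at h
      rcases mul_eq_zero.mp h with h' | h'
      · have : 0 < n.choose m := Nat.choose_pos hmn
        exact_mod_cast absurd h' (by exact_mod_cast this.ne')
      · have : ((t:ℂ) * Complex.I) ≠ 0 := by
          simp [Complex.ext_iff, ht.ne']
        exact pow_ne_zero m this h'
    · set w : ℂ := (t:ℂ) * Complex.I / z with hwdef
      have he : G 0 z = z ^ m * SC n m (fun i => (v i:ℂ) + w) := by
        rw [← SC_mulC]
        refine congrArg (SC n m) (funext fun i => ?_)
        rw [hwdef]
        push_cast
        field_simp
        ring
      rw [he] at h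
      have h2 : SC n m (fun i => (v i:ℂ) + w) = 0 :=
        (mul_eq_zero.mp h).resolve_left (pow_ne_zero m hzne)
      obtain ⟨r, hwr, hrneg⟩ := root_one_dir_neg hmn v hv h2
      -- t i = z * r, take imaginary parts
      have hz2 : (t:ℂ) * Complex.I = z * (r:ℂ) := by
        rw [← hwr, hwdef]
        field_simp
      have him : t = z.im * r := by
        have := congrArg Complex.im hz2
        simpa [Complex.mul_im] using this
      nlinarith
  -- uniform coefficient bound
  set g : ℝ → ℝ := fun τ => ∑ j ∈ Finset.range m,
    ‖cf n m j (fun i => (τ:ℂ) * (x i:ℂ) + (t:ℂ) * Complex.I) (fun i => (v i:ℂ))‖ with hgdef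
  have hgc : Continuous g := by
    rw [hgdef]
    apply continuous_finset_sum
    intro j _
    apply Continuous.norm
    simp only [cf]
    apply continuous_finset_sum
    intro s _
    apply continuous_finset_sum
    intro u _
    apply Continuous.mul continuous_const
    apply continuous_finset_prod
    intro i _
    exact ((Complex.continuous_ofReal.mul continuous_const).add continuous_const)
  obtain ⟨τC, hτCmem, hτCmax⟩ := (isCompact_Icc (a := (0:ℝ)) (b := 1)).exists_isMaxOn
    ⟨0, by norm_num⟩ hgc.continuousOn
  set R : ℝ := 1 + g τC / esymmS n m v with hRdef
  have hRbound : ∀ τ ∈ Set.Icc (0:ℝ) 1, ∀ z : ℂ, G τ z = 0 → ‖z‖ ≤ R := by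
    intro τ hτ z hGz
    have hzr : (P τ).eval z = 0 := by rw [hGP]; exact hGz
    have hbd := root_bound (Qc_natDegree _ _ hb) hm hzr
    have hsum : ∑ j ∈ Finset.range m, ‖(P τ).coeff j‖ = g τ := by
      refine Finset.sum_congr rfl fun j hj => ?_
      rw [Qc_coeff _ _ (le_of_lt (Finset.mem_range.mp hj))]
    rw [hsum, hPlc τ] at hbd
    refine hbd.trans ?_
    rw [hRdef]
    have := isMaxOn_iff.mp hτCmax τ hτ
    have h2 : g τ / esymmS n m v ≤ g τC / esymmS n m v := by gcongr
    linarith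
  -- main argument
  intro τ hτ z hzim hG0
  -- the bad set
  set A : Set ℝ := {θ | θ ∈ Set.Icc (0:ℝ) 1 ∧ ∃ w : ℂ, 0 ≤ w.im ∧ G θ w = 0} with hAdef
  have hAne : A.Nonempty := ⟨τ, hτ, z, hzim, hG0⟩
  have hAbdd : BddBelow A := ⟨0, fun a ha => ha.1.1⟩
  set τs : ℝ := sInf A with hτsdef
  have hτsIcc : τs ∈ Set.Icc (0:ℝ) 1 := by
    constructor
    · exact le_csInf hAne fun b hb => hb.1.1
    · exact le_trans (csInf_le hAbdd hAne.choose_spec |>.trans_eq rfl) ((hAne.choose_spec).1.2)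
  -- a sequence in A tending to sInf A
  have hseq : ∀ k : ℕ, ∃ a ∈ A, a < τs + 1/(k+1) :=
    fun k => Real.lt_sInf_add_pos hAne (by positivity)
  choose u huA hult using hseq
  have huge : ∀ k, τs ≤ u k := fun k => csInf_le hAbdd (huA k)
  have hutendsto : Filter.Tendsto u Filter.atTop (nhds τs) := by
    have hupper : Filter.Tendsto (fun k : ℕ => τs + 1/((k:ℝ)+1)) Filter.atTop (nhds (τs + 0)) :=
      tendsto_const_nhds.add tendsto_one_div_add_atTop_nhds_zero_nat
    rw [add_zero] at hupper
    exact tendsto_of_tendsto_of_tendsto_of_le_of_le tendsto_const_nhds hupper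
      huge (fun k => (hult k).le)
  choose w hwim hwG using fun k => (huA k).2
  have hwbound : ∀ k, w k ∈ Metric.closedBall (0:ℂ) R := by
    intro k
    rw [Metric.mem_closedBall, dist_zero_right]
    exact hRbound (u k) (huA k).1 (w k) (hwG k)
  obtain ⟨wL, -, φ, hφmono, hwtendsto⟩ :=
    (isCompact_closedBall (0:ℂ) R).tendsto_subseq hwbound
  have hpair : Filter.Tendsto (fun k => (u (φ k), w (φ k))) Filter.atTop (nhds (τs, wL)) :=
    (hutendsto.comp hφmono.tendsto_atTop).prodMk_nhds hwtendsto
  have hGL : G τs wL = 0 := by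
    have h1 := (hGcont.tendsto (τs, wL)).comp hpair
    have h2 : ((fun p : ℝ × ℂ => G p.1 p.2) ∘ (fun k => (u (φ k), w (φ k)))) = fun _ => 0 := by
      funext k
      exact hwG (φ k)
    rw [h2] at h1
    exact tendsto_nhds_unique h1 tendsto_const_nhds
  have hwt' : Filter.Tendsto (fun k => (w (φ k)).im) Filter.atTop (nhds wL.im) :=
    (Complex.continuous_im.tendsto wL).comp hwtendsto
  have himL : 0 ≤ wL.im :=
    ge_of_tendsto hwt' (Filter.Eventually.of_forall fun k => hwim (φ k))
  have hτsA : τs ∈ A := ⟨hτsIcc, wL, himL, hGL⟩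
  have hτspos : 0 < τs := by
    rcases hτsIcc.1.eq_or_lt with h | h
    · exfalso
      exact h0A wL himL (by rw [← h] at hGL; exact hGL)
    · exact h
  have himLpos : 0 < wL.im := by
    rcases himL.eq_or_lt with h | h
    · exfalso
      have : wL = ((wL.re : ℝ) : ℂ) := Complex.ext (by simp) (by simp [← h])
      exact hreal τs wL.re (by rw [← this]; exact hGL)
    · exact h
  set ε : ℝ := esymmS n m v * wL.im ^ m with hεdef
  have hεpos : 0 < ε := by positivity
  -- continuity of θ ↦ G θ wL at τs
  have hψcont : Continuous (fun θ : ℝ => G θ wL) := by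
    simp only [hGdef]
    apply continuous_finset_sum
    intro s _
    apply continuous_finset_prod
    intro i _
    exact ((Complex.continuous_ofReal.mul continuous_const).add continuous_const).add
      continuous_const
  have hev : ∀ᶠ θ in nhds τs, dist (G θ wL) 0 < ε := by
    have h1 : Filter.Tendsto (fun θ : ℝ => G θ wL) (nhds τs) (nhds 0) := by
      rw [← hGL]
      exact hψcont.tendsto τs
    exact Metric.tendsto_nhds.mp h1 ε hεpos
  rw [Metric.eventually_nhds_iff] at hev
  obtain ⟨δ, hδpos, hδprop⟩ := hev
  set θ₀ : ℝ := max 0 (τs - δ/2) with hθ₀def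
  have hθ₀Icc : θ₀ ∈ Set.Icc (0:ℝ) 1 :=
    ⟨le_max_left _ _, max_le (by norm_num) (by linarith [hτsIcc.2])⟩
  have hθ₀lt : θ₀ < τs := max_lt hτspos (by linarith)
  have hθ₀dist : dist θ₀ τs < δ := by
    rw [Real.dist_eq, abs_of_neg (by linarith)]
    have := le_max_right 0 (τs - δ/2)
    linarith
  have hθ₀notA : θ₀ ∉ A := notMem_of_lt_csInf hθ₀lt hAbdd
  -- roots of P θ₀ all have negative imaginary part
  have hrootsneg : ∀ r ∈ (P θ₀).roots, r.im < 0 := by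
    intro r hr
    by_contra hge
    push_neg at hge
    have hG0r : G θ₀ r = 0 := by
      rw [← hGP]
      exact (mem_roots (Qc_ne_zero _ _ hb)).mp hr
    exact hθ₀notA ⟨hθ₀Icc, r, hge, hG0r⟩
  -- lower bound for ‖G θ₀ wL‖
  have hlow : ε ≤ ‖G θ₀ wL‖ := by
    rw [← hGP]
    have hcard : Multiset.card (P θ₀).roots = m := Qc_roots_card _ _ hb
    have h1 := eval_lower_bound (p := P θ₀) (Qc_ne_zero _ _ hb) wL wL.im himLpos.le ?_
    · rw [hPlc θ₀, hcard] at h1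
      exact h1
    · intro r hr
      have hrim := hrootsneg r hr
      calc wL.im ≤ (wL - r).im := by rw [Complex.sub_im]; linarith
        _ ≤ |(wL - r).im| := le_abs_self _
        _ ≤ ‖wL - r‖ := Complex.abs_im_le_norm _
        _ = ‖wL - r‖ := rfl
  have hcontra := hδprop hθ₀dist
  rw [dist_zero_right] at hcontra
  linarith

set_option maxHeartbeats 1000000 in
/-- hyperbolicity in ray-positive directions -/
lemma L3 (hm : 1 ≤ m) (hmn : m ≤ n) (x v : Fin n → ℝ)
    (hv : ∀ w : ℝ, 0 ≤ w → 0 < esymmS n m (fun i => v i + w)) :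
    ∀ z : ℂ, z.im ≠ 0 → SC n m (fun i => (x i:ℂ) + z * (v i:ℂ)) ≠ 0 := by
  have hv0 : 0 < esymmS n m v := by
    have := hv 0 le_rfl
    simpa using this
  have hSv : SC n m (fun i => (v i:ℂ)) = ((esymmS n m v : ℝ) : ℂ) := SC_ofReal v
  have hb : SC n m (fun i => (v i:ℂ)) ≠ 0 := by
    rw [hSv]
    exact_mod_cast hv0.ne'
  have main : ∀ z : ℂ, 0 < z.im → SC n m (fun i => (x i:ℂ) + z * (v i:ℂ)) ≠ 0 := by
    intro z hz h0
    set P : ℝ → Polynomial ℂ := fun t =>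
      Qc n m (fun i => (x i:ℂ) + (t:ℂ) * Complex.I) (fun i => (v i:ℂ)) with hPdef
    have hroots : ∀ t : ℝ, 0 < t → ∀ r ∈ (P t).roots, r.im < 0 := by
      intro t ht r hr
      by_contra hge
      push_neg at hge
      have h1 : (P t).eval r = 0 := (mem_roots (Qc_ne_zero _ _ hb)).mp hr
      rw [Qc_eval] at h1
      refine L2 hm hmn x v hv ht 1 ⟨by norm_num, le_rfl⟩ r hge ?_
      rw [← h1]
      exact congrArg (SC n m) (funext fun i => by push_cast; ring)
    have hlow : ∀ t : ℝ, 0 < t → esymmS n m v * z.im ^ m ≤ ‖(P t).eval z‖ := by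
      intro t ht
      have hcard : Multiset.card (P t).roots = m := Qc_roots_card _ _ hb
      have h1 := eval_lower_bound (p := P t) (Qc_ne_zero _ _ hb) z z.im hz.le ?_
      · rw [hcard, Qc_leadingCoeff _ _ hb, hSv] at h1
        simpa [abs_of_pos hv0] using h1
      · intro r hr
        have hrim := hroots t ht r hr
        calc z.im ≤ (z - r).im := by rw [Complex.sub_im]; linarith
          _ ≤ |(z - r).im| := le_abs_self _
          _ ≤ ‖z - r‖ := Complex.abs_im_le_norm _
          _ = ‖z - r‖ := rfl
    have hcont : Continuous (fun t : ℝ =>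
        SC n m (fun i => ((x i:ℂ) + (t:ℂ) * Complex.I) + z * (v i:ℂ))) := by
      apply continuous_finset_sum
      intro s _
      apply continuous_finset_prod
      intro i _
      exact ((continuous_const.add (Complex.continuous_ofReal.mul continuous_const))).add
        continuous_const
    have h00 : SC n m (fun i => ((x i:ℂ) + ((0:ℝ):ℂ) * Complex.I) + z * (v i:ℂ)) = 0 := by
      rw [← h0]
      exact congrArg (SC n m) (funext fun i => by push_cast; ring)
    have hev : ∀ᶠ t : ℝ in nhds 0, dist
        (SC n m (fun i => ((x i:ℂ) + (t:ℂ) * Complex.I) + z * (v i:ℂ))) 0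
          < esymmS n m v * z.im ^ m := by
      have h1 := hcont.tendsto 0
      rw [h00] at h1
      exact Metric.tendsto_nhds.mp h1 _ (by positivity)
    rw [Metric.eventually_nhds_iff] at hev
    obtain ⟨δ, hδpos, hδprop⟩ := hev
    have hkey := hδprop (y := δ/2) (by
      rw [Real.dist_eq, sub_zero, abs_of_pos (by linarith)]; linarith)
    have h2 := hlow (δ/2) (by linarith)
    rw [dist_zero_right] at hkey
    have h3 : (P (δ/2)).eval z =
        SC n m (fun i => ((x i:ℂ) + ((δ/2 : ℝ):ℂ) * Complex.I) + z * (v i:ℂ)) := Qc_eval _ _ z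
    rw [h3] at h2
    have : (0:ℝ) < esymmS n m v * z.im ^ m := by positivity
    linarith
  intro z hz h0
  rcases lt_or_gt_of_ne hz with hneg | hpos
  · have hconj : (starRingEnd ℂ) (SC n m (fun i => (x i:ℂ) + z * (v i:ℂ)))
        = SC n m (fun i => (x i:ℂ) + ((starRingEnd ℂ) z) * (v i:ℂ)) := by
      rw [SC, SC, map_sum]
      refine Finset.sum_congr rfl fun s _ => ?_
      rw [map_prod]
      refine Finset.prod_congr rfl fun i _ => ?_
      simp [Complex.conj_ofReal]
    refine main ((starRingEnd ℂ) z) (by simpa using hneg) ?_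
    rw [← hconj, h0, map_zero]
  · exact main z hpos h0

set_option maxHeartbeats 1000000 in
/-- positivity along segments between ray-positive directions -/
lemma L4 (hm : 1 ≤ m) (hmn : m ≤ n) (x v : Fin n → ℝ)
    (hx : ∀ s : ℝ, 0 ≤ s → 0 < esymmS n m (fun i => x i + s))
    (hv : ∀ w : ℝ, 0 ≤ w → 0 < esymmS n m (fun i => v i + w)) :
    ∀ c : ℝ, 0 ≤ c → 0 < esymmS n m (fun i => x i + c * v i) := by
  set V : ℝ → Fin n → ℝ := fun θ i => (1 - θ) + θ * v i with hVdef
  have hVray : ∀ θ ∈ Set.Icc (0:ℝ) 1, ∀ w : ℝ, 0 ≤ w →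
      0 < esymmS n m (fun i => V θ i + w) := by
    intro θ hθ w hw
    rcases eq_or_lt_of_le hθ.1 with h0 | hpos
    · have he : (fun i => V θ i + w) = fun _ : Fin n => (1 + w) := by
        funext i
        rw [hVdef]
        simp [← h0]
      rw [he, esymmS_const]
      have hch : 0 < n.choose m := Nat.choose_pos hmn
      have h1w : (0:ℝ) < 1 + w := by linarith
      positivity
    · have hθ1 := hθ.2
      have he : (fun i => V θ i + w) = fun i => θ * (v i + (1 - θ + w)/θ) := by
        funext i
        rw [hVdef]
        field_simp
        ring
      rw [he, esymmS_smul]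
      have harg : 0 ≤ (1 - θ + w)/θ := div_nonneg (by linarith) hpos.le
      exact mul_pos (pow_pos hpos m) (hv _ harg)
  have hVS : ∀ θ ∈ Set.Icc (0:ℝ) 1, 0 < esymmS n m (V θ) := by
    intro θ hθ
    have := hVray θ hθ 0 le_rfl
    simpa using this
  have hVcont : ∀ i : Fin n, Continuous (fun θ : ℝ => V θ i) := by
    intro i
    rw [hVdef]
    exact (continuous_const.sub continuous_id).add (continuous_id.mul continuous_const)
  have hScont : Continuous (fun θ => esymmS n m (V θ)) := by
    simp only [esymmS]
    apply continuous_finset_sum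
    intro s _
    apply continuous_finset_prod
    intro i _
    exact hVcont i
  obtain ⟨θδ, hθδmem, hθδmin⟩ := (isCompact_Icc (a := (0:ℝ)) (b := 1)).exists_isMinOn
    ⟨0, by norm_num⟩ hScont.continuousOn
  set δ : ℝ := esymmS n m (V θδ) with hδdef
  have hδpos : 0 < δ := hVS θδ hθδmem
  have hδle : ∀ θ ∈ Set.Icc (0:ℝ) 1, δ ≤ esymmS n m (V θ) := fun θ hθ =>
    isMinOn_iff.mp hθδmin θ hθ
  set F : ℝ → ℝ → ℝ := fun θ s => esymmS n m (fun i => x i + s * V θ i) with hFdef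
  have hF0pos : ∀ θ : ℝ, 0 < F θ 0 := by
    intro θ
    have he : F θ 0 = esymmS n m (fun i => x i + 0) := by
      rw [hFdef]
      exact congrArg (esymmS n m) (funext fun i => by ring)
    rw [he]
    exact hx 0 le_rfl
  have hbθ : ∀ θ : ℝ, θ ∈ Set.Icc (0:ℝ) 1 → SC n m (fun i => ((V θ i : ℝ):ℂ)) ≠ 0 := by
    intro θ hθ
    rw [SC_ofReal]
    exact_mod_cast (hVS θ hθ).ne'
  set P : ℝ → Polynomial ℂ := fun θ =>
    Qc n m (fun i => ((x i : ℝ):ℂ)) (fun i => ((V θ i : ℝ):ℂ)) with hPdef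
  have hPF : ∀ (θ s : ℝ), (P θ).eval ((s:ℝ):ℂ) = ((F θ s : ℝ) : ℂ) := by
    intro θ s
    rw [hPdef]
    show (Qc n m _ _).eval _ = _
    rw [Qc_eval]
    have he : (fun i => ((x i : ℝ):ℂ) + ((s:ℝ):ℂ) * ((V θ i : ℝ):ℂ))
        = fun i => (((x i + s * V θ i : ℝ)):ℂ) := by
      funext i
      push_cast
      ring
    rw [he, SC_ofReal]
    rfl
  have hlcθ : ∀ θ ∈ Set.Icc (0:ℝ) 1, ‖(P θ).leadingCoeff‖ = esymmS n m (V θ) := by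
    intro θ hθ
    rw [hPdef]
    show ‖(Qc n m _ _).leadingCoeff‖ = _
    rw [Qc_leadingCoeff _ _ (hbθ θ hθ), SC_ofReal]
    exact (Eq.refl _).trans (by
      rw [Complex.norm_real, Real.norm_eq_abs]
      exact abs_of_pos (hVS θ hθ))
  -- joint continuity of F
  have hFcont : Continuous (fun p : ℝ × ℝ => F p.1 p.2) := by
    rw [hFdef]
    apply continuous_finset_sum
    intro s _
    apply continuous_finset_prod
    intro i _
    exact continuous_const.add (continuous_snd.mul ((hVcont i).comp continuous_fst))
  -- uniform coefficient bound
  set g : ℝ → ℝ := fun θ => ∑ j ∈ Finset.range m,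
    ‖cf n m j (fun i => ((x i : ℝ):ℂ)) (fun i => ((V θ i : ℝ):ℂ))‖ with hgdef
  have hgc : Continuous g := by
    rw [hgdef]
    apply continuous_finset_sum
    intro j _
    apply Continuous.norm
    simp only [cf]
    apply continuous_finset_sum
    intro s _
    apply continuous_finset_sum
    intro u _
    apply Continuous.mul
    · apply continuous_finset_prod
      intro i _
      exact Complex.continuous_ofReal.comp (hVcont i)
    · exact continuous_const
  obtain ⟨θC, hθCmem, hθCmax⟩ := (isCompact_Icc (a := (0:ℝ)) (b := 1)).exists_isMaxOn
    ⟨0, by norm_num⟩ hgc.continuousOn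
  set R : ℝ := 1 + g θC / δ with hRdef
  have hRbound : ∀ θ ∈ Set.Icc (0:ℝ) 1, ∀ z : ℂ, (P θ).eval z = 0 → ‖z‖ ≤ R := by
    intro θ hθ z hz
    have hbd := root_bound (Qc_natDegree _ _ (hbθ θ hθ)) hm hz
    have hsum : ∑ j ∈ Finset.range m, ‖(P θ).coeff j‖ = g θ := by
      refine Finset.sum_congr rfl fun j hj => ?_
      rw [hPdef]
      show ‖(Qc n m _ _).coeff j‖ = _
      rw [Qc_coeff _ _ (le_of_lt (Finset.mem_range.mp hj))]
    rw [hsum] at hbd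
    have hlc := hlcθ θ hθ
    refine hbd.trans ?_
    rw [hRdef, hlc]
    have h1 : g θ ≤ g θC := isMaxOn_iff.mp hθCmax θ hθ
    have hg0 : 0 ≤ g θC := by
      simp only [hgdef]
      exact Finset.sum_nonneg fun j _ => norm_nonneg _
    have h2 : g θ / esymmS n m (V θ) ≤ g θC / δ :=
      div_le_div₀ hg0 h1 hδpos (hδle θ hθ)
    linarith
  -- no zeros on [0,1] × [0,∞)
  have hAall : ∀ θ ∈ Set.Icc (0:ℝ) 1, ∀ s : ℝ, 0 ≤ s → F θ s ≠ 0 := by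
    intro θ hθ s hs hF0
    set A : Set ℝ := {a | a ∈ Set.Icc (0:ℝ) 1 ∧ ∃ b : ℝ, 0 ≤ b ∧ F a b = 0} with hAdef
    have hAne : A.Nonempty := ⟨θ, hθ, s, hs, hF0⟩
    have hAbdd : BddBelow A := ⟨0, fun a ha => ha.1.1⟩
    set τs : ℝ := sInf A with hτsdef
    have hτsIcc : τs ∈ Set.Icc (0:ℝ) 1 := by
      constructor
      · exact le_csInf hAne fun b hb => hb.1.1
      · exact le_trans (csInf_le hAbdd hAne.choose_spec) ((hAne.choose_spec).1.2)
    have hseq : ∀ k : ℕ, ∃ a ∈ A, a < τs + 1/(k+1) :=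
      fun k => Real.lt_sInf_add_pos hAne (by positivity)
    choose u huA hult using hseq
    have huge : ∀ k, τs ≤ u k := fun k => csInf_le hAbdd (huA k)
    have hutendsto : Filter.Tendsto u Filter.atTop (nhds τs) := by
      have hupper : Filter.Tendsto (fun k : ℕ => τs + 1/((k:ℝ)+1)) Filter.atTop
          (nhds (τs + 0)) := tendsto_const_nhds.add tendsto_one_div_add_atTop_nhds_zero_nat
      rw [add_zero] at hupper
      exact tendsto_of_tendsto_of_tendsto_of_le_of_le tendsto_const_nhds hupper
        huge (fun k => (hult k).le)
    choose w hws hwF using fun k => (huA k).2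
    have hwbound : ∀ k, w k ∈ Set.Icc (0:ℝ) R := by
      intro k
      refine ⟨hws k, ?_⟩
      have heval : (P (u k)).eval ((w k : ℝ):ℂ) = 0 := by
        rw [hPF, hwF k]
        norm_num
      have := hRbound (u k) (huA k).1 _ heval
      rw [Complex.norm_real, Real.norm_eq_abs, abs_of_nonneg (hws k)] at this
      exact this
    obtain ⟨wL, hwLmem, φ, hφmono, hwtendsto⟩ :=
      (isCompact_Icc (a := (0:ℝ)) (b := R)).tendsto_subseq hwbound
    have hpair : Filter.Tendsto (fun k => (u (φ k), w (φ k))) Filter.atTop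
        (nhds (τs, wL)) :=
      (hutendsto.comp hφmono.tendsto_atTop).prodMk_nhds hwtendsto
    have hFL : F τs wL = 0 := by
      have h1 := (hFcont.tendsto (τs, wL)).comp hpair
      have h2 : ((fun p : ℝ × ℝ => F p.1 p.2) ∘ (fun k => (u (φ k), w (φ k)))) = fun _ => 0 := by
        funext k
        exact hwF (φ k)
      rw [h2] at h1
      exact tendsto_nhds_unique h1 tendsto_const_nhds
    have hτsA : τs ∈ A := ⟨hτsIcc, wL, hwLmem.1, hFL⟩
    have h0F : ∀ b : ℝ, 0 ≤ b → F 0 b ≠ 0 := by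
      intro b hb
      have he : F 0 b = esymmS n m (fun i => x i + b) := by
        rw [hFdef]
        refine congrArg (esymmS n m) (funext fun i => ?_)
        rw [hVdef]
        ring_nf
      rw [he]
      exact (hx b hb).ne'
    have hτspos : 0 < τs := by
      rcases hτsIcc.1.eq_or_lt with h | h
      · exfalso
        rw [← h] at hFL
        exact h0F wL hwLmem.1 hFL
      · exact h
    have hwLpos : 0 < wL := by
      rcases (hwLmem.1).eq_or_lt with h | h
      · exfalso
        rw [← h] at hFL
        exact (hF0pos τs).ne' hFL
      · exact h
    set ε : ℝ := δ * wL ^ m with hεdef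
    have hεpos : 0 < ε := by positivity
    have hψcont : Continuous (fun a : ℝ => F a wL) := by
      rw [hFdef]
      apply continuous_finset_sum
      intro s' _
      apply continuous_finset_prod
      intro i _
      exact continuous_const.add (continuous_const.mul (hVcont i))
    have hev : ∀ᶠ a : ℝ in nhds τs, dist (F a wL) 0 < ε := by
      have h1 := hψcont.tendsto τs
      rw [hFL] at h1
      exact Metric.tendsto_nhds.mp h1 _ hεpos
    rw [Metric.eventually_nhds_iff] at hev
    obtain ⟨d, hdpos, hdprop⟩ := hev
    set θ₀ : ℝ := max 0 (τs - d/2) with hθ₀def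
    have hθ₀Icc : θ₀ ∈ Set.Icc (0:ℝ) 1 :=
      ⟨le_max_left _ _, max_le (by norm_num) (by linarith [hτsIcc.2])⟩
    have hθ₀lt : θ₀ < τs := max_lt hτspos (by linarith)
    have hθ₀dist : dist θ₀ τs < d := by
      rw [Real.dist_eq, abs_of_neg (by linarith)]
      have := le_max_right 0 (τs - d/2)
      linarith
    have hθ₀notA : θ₀ ∉ A := notMem_of_lt_csInf hθ₀lt hAbdd
    -- roots of P θ₀ are negative reals
    have hrootsneg : ∀ r ∈ (P θ₀).roots, wL ≤ ‖((wL:ℝ):ℂ) - r‖ := by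
      intro r hr
      have hr0 : (P θ₀).eval r = 0 := (mem_roots (Qc_ne_zero _ _ (hbθ θ₀ hθ₀Icc))).mp hr
      have hrim : r.im = 0 := by
        by_contra him
        refine L3 hm hmn x (V θ₀) (hVray θ₀ hθ₀Icc) r him ?_
        rw [← hr0, hPdef]
        exact (Qc_eval _ _ r).symm
      have hre : r = ((r.re : ℝ):ℂ) := Complex.ext rfl (by simp [hrim])
      have hFre : F θ₀ r.re = 0 := by
        have h1 : (P θ₀).eval ((r.re:ℝ):ℂ) = 0 := by rw [← hre]; exact hr0
        rw [hPF] at h1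
        exact_mod_cast h1
      have hreneg : r.re < 0 := by
        by_contra hge
        push_neg at hge
        exact hθ₀notA ⟨hθ₀Icc, r.re, hge, hFre⟩
      rw [hre]
      have he2 : ((wL:ℝ):ℂ) - ((r.re:ℝ):ℂ) = (((wL - r.re : ℝ)):ℂ) := by push_cast; ring
      rw [he2, Complex.norm_real, Real.norm_eq_abs, abs_of_pos (by linarith)]
      linarith
    have hlow : ε ≤ ‖(P θ₀).eval ((wL:ℝ):ℂ)‖ := by
      have hcard : Multiset.card (P θ₀).roots = m := Qc_roots_card _ _ (hbθ θ₀ hθ₀Icc)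
      have h1 := eval_lower_bound (p := P θ₀) (Qc_ne_zero _ _ (hbθ θ₀ hθ₀Icc))
        ((wL:ℝ):ℂ) wL hwLpos.le hrootsneg
      rw [hcard, hlcθ θ₀ hθ₀Icc] at h1
      refine le_trans ?_ h1
      rw [hεdef]
      exact mul_le_mul_of_nonneg_right (hδle θ₀ hθ₀Icc) (pow_nonneg hwLpos.le m)
    have hkey := hdprop hθ₀dist
    rw [dist_zero_right] at hkey
    rw [hPF] at hlow
    rw [Complex.norm_real, Real.norm_eq_abs] at hlow
    have : |F θ₀ wL| ≤ ‖F θ₀ wL‖ := by rw [Real.norm_eq_abs]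
    rw [Real.norm_eq_abs] at hkey
    linarith
  -- conclusion via IVT
  intro c hc
  have h1notA := hAall 1 ⟨by norm_num, le_rfl⟩
  have hF1 : ∀ b : ℝ, F 1 b = esymmS n m (fun i => x i + b * v i) := by
    intro b
    rw [hFdef]
    refine congrArg (esymmS n m) (funext fun i => ?_)
    rw [hVdef]
    ring_nf
  have hF10 : 0 < F 1 0 := hF0pos 1
  rcases lt_trichotomy (F 1 c) 0 with hlt | heq | hgt
  · exfalso
    have hcont1 : ContinuousOn (F 1) (Set.Icc 0 c) :=
      (hFcont.comp (continuous_const.prodMk continuous_id)).continuousOn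
    have hsub := intermediate_value_Icc' hc hcont1
    have h0mem : (0:ℝ) ∈ Set.Icc (F 1 c) (F 1 0) := ⟨hlt.le, hF10.le⟩
    obtain ⟨s', hs'mem, hs'eq⟩ := hsub h0mem
    exact h1notA s' hs'mem.1 hs'eq
  · exact absurd heq (h1notA c hc)
  · rw [hF1 c] at hgt
    exact hgt

end GardingAux

open GardingAux in
/-- The Gårding cone is a convex cone. -/
theorem gamma_convex_cone (n m : ℕ) (hm : 1 ≤ m) (hmn : m ≤ n) :
    (∀ lam mu : Fin n → ℝ, GammaCone n m lam → GammaCone n m mu →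
      ∀ s t : ℝ, 0 < s → 0 < t → GammaCone n m (fun i => s * lam i + t * mu i)) ∧
    Convex ℝ {lam : Fin n → ℝ | GammaCone n m lam} := by
  have cone : ∀ lam mu : Fin n → ℝ, GammaCone n m lam → GammaCone n m mu →
      ∀ s t : ℝ, 0 < s → 0 < t → GammaCone n m (fun i => s * lam i + t * mu i) := by
    intro lam mu hlam hmu s t hs ht j hj1 hjm
    have hjn : j ≤ n := le_trans hjm hmn
    have hlam' : ∀ j', 1 ≤ j' → j' ≤ j → 0 < esymmS n j' (fun i => s * lam i) := by
      intro j' h1 h2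
      rw [esymmS_smul]
      exact mul_pos (pow_pos hs j') (hlam j' h1 (h2.trans hjm))
    have hx : ∀ u : ℝ, 0 ≤ u → 0 < esymmS n j (fun i => s * lam i + u) :=
      rayPos hj1 hjn hlam'
    have hmu' : ∀ j', 1 ≤ j' → j' ≤ j → 0 < esymmS n j' mu :=
      fun j' h1 h2 => hmu j' h1 (h2.trans hjm)
    have hv : ∀ u : ℝ, 0 ≤ u → 0 < esymmS n j (fun i => mu i + u) := rayPos hj1 hjn hmu'
    exact L4 hj1 hjn (fun i => s * lam i) mu hx hv t ht.le
  refine ⟨cone, ?_⟩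
  rw [convex_iff_forall_pos]
  intro a ha b hb p q hp hq hpq
  have hmem := cone a b ha hb p q hp hq
  show GammaCone n m (p • a + q • b)
  have he : (p • a + q • b) = (fun i => p * a i + q * b i) := by
    funext i
    simp
  rw [he]
  exact hmem
end

section
/- For every 1 ≤ m ≤ n, the function λ ↦ S_m(λ)^{1/m} is concave on Γ_m: for all λ, μ ∈ Γ_m and t ∈ [0,1], S_m(tλ + (1−t)μ)^{1/m} ≥ t·S_m(λ)^{1/m} + (1−t)·S_m(μ)^{1/m}. (Note that tλ + (1−t)μ ∈ Γ_m since Γ_m is convex.) -/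
open Finset

namespace Gard
open Finset Polynomial Complex Filter
variable {n m : ℕ}
set_option maxHeartbeats 1600000

/-- complex elementary symmetric polynomial -/
noncomputable def esC (n k : ℕ) (v : Fin n → ℂ) : ℂ :=
  ∑ s ∈ Finset.univ.powersetCard k, ∏ i ∈ s, v i

/-- the one-variable polynomial function `ζ ↦ S_m(v + ζ u)` -/
noncomputable def Qc (n m : ℕ) (v u : Fin n → ℂ) (z : ℂ) : ℂ :=
  ∑ s ∈ Finset.univ.powersetCard m, ∏ i ∈ s, (v i + u i * z)

lemma esC_real (k : ℕ) (x : Fin n → ℝ) : esC n k (fun i => (x i : ℂ)) = (esymmS n k x : ℂ) := by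
  unfold esC esymmS; push_cast; rfl

lemma Qc_zero (v u : Fin n → ℂ) : Qc n m v u 0 = esC n m v := by
  unfold Qc esC; simp

/-- coefficients of `Qc` as a polynomial in `z` -/
noncomputable def cf (n m j : ℕ) (v u : Fin n → ℂ) : ℂ :=
  ∑ s ∈ Finset.univ.powersetCard m, ∑ A ∈ s.powersetCard j, (∏ i ∈ A, u i) * ∏ i ∈ s \ A, v i

lemma Qc_eq_sum_cf (v u : Fin n → ℂ) (z : ℂ) :
    Qc n m v u z = ∑ j ∈ Finset.range (m+1), cf n m j v u * z ^ j := by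
  unfold Qc cf
  have h : ∀ s ∈ Finset.univ.powersetCard m, ∏ i ∈ s, (v i + u i * z)
      = ∑ j ∈ Finset.range (m+1), ∑ A ∈ s.powersetCard j, ((∏ i ∈ A, u i) * ∏ i ∈ s \ A, v i) * z ^ j := by
    intro s hs
    have hcard : s.card = m := (Finset.mem_powersetCard_univ.mp hs)
    have h1 : ∏ i ∈ s, (u i * z + v i) = ∑ A ∈ s.powerset, (∏ i ∈ A, (u i * z)) * ∏ i ∈ s \ A, v i :=
      Finset.prod_add _ _ s
    calc ∏ i ∈ s, (v i + u i * z) = ∏ i ∈ s, (u i * z + v i) := by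
          apply Finset.prod_congr rfl; intros; ring
      _ = ∑ A ∈ s.powerset, (∏ i ∈ A, (u i * z)) * ∏ i ∈ s \ A, v i := h1
      _ = ∑ j ∈ Finset.range (s.card+1), ∑ A ∈ s.powersetCard j, (∏ i ∈ A, (u i * z)) * ∏ i ∈ s \ A, v i :=
          Finset.sum_powerset s _
      _ = ∑ j ∈ Finset.range (m+1), ∑ A ∈ s.powersetCard j, ((∏ i ∈ A, u i) * ∏ i ∈ s \ A, v i) * z ^ j := by
          rw [hcard]
          refine Finset.sum_congr rfl fun j hj => Finset.sum_congr rfl fun A hA => ?_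
          have hAcard : A.card = j := (Finset.mem_powersetCard.mp hA).2
          rw [Finset.prod_mul_distrib, Finset.prod_const, hAcard]; ring
  rw [Finset.sum_congr rfl h, Finset.sum_comm]
  refine Finset.sum_congr rfl fun j hj => ?_
  rw [Finset.sum_mul]
  refine Finset.sum_congr rfl fun s hs => ?_
  rw [Finset.sum_mul]

lemma cf_top (v u : Fin n → ℂ) : cf n m m v u = esC n m u := by
  unfold cf esC
  refine Finset.sum_congr rfl fun s hs => ?_
  have hcard : s.card = m := (Finset.mem_powersetCard_univ.mp hs)
  rw [← hcard, Finset.powersetCard_self]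
  simp


lemma root_bound (hm : 1 ≤ m) (v u : Fin n → ℂ) (hu : esC n m u ≠ 0) (z : ℂ)
    (hz : Qc n m v u z = 0) :
    ‖z‖ ≤ 1 + (∑ j ∈ Finset.range m, ‖cf n m j v u‖) / ‖esC n m u‖ := by
  set S := ∑ j ∈ Finset.range m, ‖cf n m j v u‖ with hS
  have hL : 0 < ‖esC n m u‖ := norm_pos_iff.mpr hu
  have hSnn : 0 ≤ S := Finset.sum_nonneg fun _ _ => norm_nonneg _
  by_cases h1 : ‖z‖ ≤ 1
  · linarith [div_nonneg hSnn hL.le]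
  push_neg at h1
  have key : ‖esC n m u‖ * ‖z‖ ≤ S := by
    have hsum : esC n m u * z ^ m = -∑ j ∈ Finset.range m, cf n m j v u * z ^ j := by
      have := Qc_eq_sum_cf (n := n) (m := m) v u z
      rw [hz, Finset.sum_range_succ, cf_top] at this
      linear_combination -this
    have hnorm : ‖esC n m u‖ * ‖z‖ ^ m ≤ ∑ j ∈ Finset.range m, ‖cf n m j v u‖ * ‖z‖ ^ j := by
      calc ‖esC n m u‖ * ‖z‖ ^ m = ‖esC n m u * z ^ m‖ := by rw [norm_mul, norm_pow]
        _ = ‖∑ j ∈ Finset.range m, cf n m j v u * z ^ j‖ := by rw [hsum, norm_neg]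
        _ ≤ ∑ j ∈ Finset.range m, ‖cf n m j v u * z ^ j‖ := norm_sum_le _ _
        _ = ∑ j ∈ Finset.range m, ‖cf n m j v u‖ * ‖z‖ ^ j := by
            refine Finset.sum_congr rfl fun j _ => ?_; rw [norm_mul, norm_pow]
    have hstep : ∑ j ∈ Finset.range m, ‖cf n m j v u‖ * ‖z‖ ^ j ≤ S * ‖z‖ ^ (m-1) := by
      rw [hS, Finset.sum_mul]
      refine Finset.sum_le_sum fun j hj => ?_
      have hjm : j ≤ m - 1 := by have := Finset.mem_range.mp hj; omega
      exact mul_le_mul_of_nonneg_left (pow_le_pow_right₀ h1.le hjm) (norm_nonneg _)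
    have hpow : ‖z‖ ^ m = ‖z‖ ^ (m-1) * ‖z‖ := by
      rw [← pow_succ]; congr 1; omega
    rw [hpow] at hnorm
    have hzpow : 0 < ‖z‖ ^ (m-1) := pow_pos (lt_trans one_pos h1) _
    nlinarith [hnorm, hstep, hzpow]
  have : ‖z‖ ≤ S / ‖esC n m u‖ := by
    rw [le_div_iff₀ hL]; linarith [key]
  linarith [div_nonneg hSnn hL.le]

/-- factorization of `Qc` into linear factors over ℂ -/
lemma exists_roots (hm : 1 ≤ m) (v u : Fin n → ℂ) (hu : esC n m u ≠ 0) :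
    ∃ z : Fin m → ℂ, ∀ ζ : ℂ, Qc n m v u ζ = esC n m u * ∏ i, (ζ - z i) := by
  classical
  set P : Polynomial ℂ := ∑ s ∈ Finset.univ.powersetCard m, ∏ i ∈ s, (C (v i) + C (u i) * X) with hP
  have heval : ∀ ζ : ℂ, P.eval ζ = Qc n m v u ζ := by
    intro ζ; rw [hP, eval_finset_sum]
    refine Finset.sum_congr rfl fun s _ => ?_
    rw [eval_prod]; refine Finset.prod_congr rfl fun i _ => ?_; simp
  have hdegle : ∀ s : Finset (Fin n), (∏ i ∈ s, (C (v i) + C (u i) * X)).natDegree ≤ s.card := by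
    intro s
    refine le_trans (Polynomial.natDegree_prod_le s _) ?_
    rw [Finset.card_eq_sum_ones s]
    refine Finset.sum_le_sum fun i _ => ?_
    refine le_trans (Polynomial.natDegree_add_le _ _) ?_
    simp only [Polynomial.natDegree_C, max_le_iff]
    constructor
    · omega
    · exact le_trans (Polynomial.natDegree_mul_le) (by simp)
  have hcoeffprod : ∀ s : Finset (Fin n),
      (∏ i ∈ s, (C (v i) + C (u i) * X)).coeff s.card = ∏ i ∈ s, u i := by
    intro s
    induction s using Finset.induction_on with
    | empty => simp
    | @insert a s ha ih =>
        rw [Finset.prod_insert ha, Finset.prod_insert ha, Finset.card_insert_of_notMem ha]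
        rw [add_mul, Polynomial.coeff_add, Polynomial.coeff_C_mul]
        rw [Polynomial.coeff_eq_zero_of_natDegree_lt (lt_of_le_of_lt (hdegle s) (Nat.lt_succ_self _))]
        rw [mul_zero, zero_add, mul_assoc, Polynomial.coeff_C_mul, Polynomial.coeff_X_mul, ih]
  have hcoeffm : P.coeff m = esC n m u := by
    rw [hP, Polynomial.finset_sum_coeff]
    unfold esC
    refine Finset.sum_congr rfl fun s hs => ?_
    have hcard : s.card = m := Finset.mem_powersetCard_univ.mp hs
    rw [← hcard, hcoeffprod]
  have hPne : P ≠ 0 := fun h => hu (by rw [← hcoeffm, h, Polynomial.coeff_zero])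
  have hdeg : P.natDegree = m := by
    refine le_antisymm ?_ (Polynomial.le_natDegree_of_ne_zero (by rw [hcoeffm]; exact hu))
    refine Polynomial.natDegree_sum_le_of_forall_le _ _ fun s hs => ?_
    have hcard : s.card = m := Finset.mem_powersetCard_univ.mp hs
    exact hcard ▸ hdegle s
  have hlead : P.leadingCoeff = esC n m u := by
    rw [Polynomial.leadingCoeff, hdeg, hcoeffm]
  have hsplits : P.Splits := IsAlgClosed.splits P
  have hcard : Multiset.card P.roots = m :=
    (Polynomial.splits_iff_card_roots.mp hsplits).trans hdeg
  have hfact := hsplits.eq_prod_roots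
  set l : List ℂ := P.roots.toList with hl
  have hlen : l.length = m := by rw [hl, Multiset.length_toList, hcard]
  refine ⟨fun i => l.get (finCongr hlen.symm i), fun ζ => ?_⟩
  rw [← heval]
  conv_lhs => rw [hfact]
  rw [Polynomial.eval_mul, Polynomial.eval_C, hlead]
  congr 1
  have hroots : P.roots = ↑l := (Multiset.coe_toList _).symm
  rw [hroots, Multiset.map_coe, Multiset.prod_coe]
  conv_lhs => rw [← List.ofFn_get l, List.map_ofFn, List.prod_ofFn]
  rw [Polynomial.eval_prod]
  rw [← Fin.prod_congr' (fun j : Fin l.length => eval ζ (((fun a => X - C a) ∘ l.get) j)) hlen.symm]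
  refine Finset.prod_congr rfl fun i _ => ?_
  simp [finCongr]


/-- derivative of a product of monic linear factors -/
lemma derivative_prod_linear {R : Type*} [CommRing R] {ι : Type*} [DecidableEq ι]
    (g : ι → R) (s : Finset ι) :
    derivative (∏ i ∈ s, (X + C (g i))) = ∑ j ∈ s, ∏ i ∈ s.erase j, (X + C (g i)) := by
  induction s using Finset.induction_on with
  | empty => simp
  | @insert a s ha ih =>
      rw [Finset.prod_insert ha, derivative_mul, ih, Finset.sum_insert ha, Finset.erase_insert ha]
      rw [derivative_add, derivative_X, derivative_C, add_zero, one_mul]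
      rw [Finset.mul_sum]
      congr 1
      refine Finset.sum_congr rfl fun j hj => ?_
      have haj : a ≠ j := by rintro rfl; exact ha hj
      rw [Finset.erase_insert_of_ne haj,
        Finset.prod_insert (fun hmem => ha (Finset.mem_of_mem_erase hmem))]

/-- reindexing pairs (s, j ∈ s) ↦ (s.erase j, j) -/
lemma sum_erase_reindex {M : Type*} [AddCommMonoid M] (k : ℕ) (hk : 1 ≤ k)
    (f : Finset (Fin n) → M) :
    ∑ s ∈ Finset.univ.powersetCard k, ∑ j ∈ s, f (s.erase j)
      = ∑ A ∈ Finset.univ.powersetCard (k-1), (n - (k-1)) • f A := by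
  have step1 : ∑ s ∈ Finset.univ.powersetCard k, ∑ j ∈ s, f (s.erase j)
      = ∑ A ∈ Finset.univ.powersetCard (k-1), ∑ _j ∈ Finset.univ \ A, f A := by
    rw [Finset.sum_sigma', Finset.sum_sigma']
    refine Finset.sum_nbij' (fun p => ⟨p.1.erase p.2, p.2⟩) (fun q => ⟨insert q.2 q.1, q.2⟩)
      ?_ ?_ ?_ ?_ ?_
    · rintro ⟨s, j⟩ hp
      simp only [Finset.mem_sigma, Finset.mem_powersetCard_univ] at hp ⊢
      obtain ⟨hs, hj⟩ := hp
      refine ⟨by rw [Finset.card_erase_of_mem hj, hs], ?_⟩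
      simp [Finset.mem_sdiff, Finset.notMem_erase]
    · rintro ⟨A, j⟩ hq
      simp only [Finset.mem_sigma, Finset.mem_powersetCard_univ, Finset.mem_sdiff] at hq ⊢
      obtain ⟨hA, -, hj⟩ := hq
      refine ⟨by rw [Finset.card_insert_of_notMem hj, hA]; omega, Finset.mem_insert_self _ _⟩
    · rintro ⟨s, j⟩ hp
      simp only [Finset.mem_sigma, Finset.mem_powersetCard_univ] at hp
      simp [Finset.insert_erase hp.2]
    · rintro ⟨A, j⟩ hq
      simp only [Finset.mem_sigma, Finset.mem_powersetCard_univ, Finset.mem_sdiff] at hq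
      simp [Finset.erase_insert hq.2.2]
    · rintro ⟨s, j⟩ hp; rfl
  rw [step1]
  refine Finset.sum_congr rfl fun A hA => ?_
  rw [Finset.sum_const, Finset.card_sdiff_of_subset (Finset.subset_univ A), Finset.card_univ,
    Fintype.card_fin, Finset.mem_powersetCard_univ.mp hA]

/-- the polynomial `E_k(y) = ∑_{|S|=k} ∏_{i∈S} (X + y_i)` -/
noncomputable def Ek (n k : ℕ) (y : Fin n → ℝ) : Polynomial ℝ :=
  ∑ s ∈ Finset.univ.powersetCard k, ∏ i ∈ s, (X + C (y i))

lemma natDegree_Ek (k : ℕ) (hk : k ≤ n) (y : Fin n → ℝ) : (Ek n k y).natDegree = k := by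
  have hmon : ∀ s : Finset (Fin n), (∏ i ∈ s, (X + C (y i))).Monic :=
    fun s => monic_prod_of_monic _ _ fun i _ => monic_X_add_C _
  have hdeg : ∀ s : Finset (Fin n), (∏ i ∈ s, (X + C (y i))).natDegree = s.card := by
    intro s
    rw [Polynomial.natDegree_prod_of_monic _ _ fun i _ => monic_X_add_C _]
    simp
  have hcoeff : (Ek n k y).coeff k = (n.choose k : ℝ) := by
    unfold Ek
    rw [Polynomial.finset_sum_coeff]
    have : ∀ s ∈ Finset.univ.powersetCard k, (∏ i ∈ s, (X + C (y i))).coeff k = 1 := by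
      intro s hs
      have hcard : s.card = k := Finset.mem_powersetCard_univ.mp hs
      have := (hmon s).coeff_natDegree
      rwa [hdeg, hcard] at this
    rw [Finset.sum_congr rfl this, Finset.sum_const, Finset.card_powersetCard,
      Finset.card_univ, Fintype.card_fin]
    simp
  have hne : (Ek n k y).coeff k ≠ 0 := by
    rw [hcoeff]
    exact_mod_cast (Nat.choose_pos hk).ne'
  refine le_antisymm ?_ (Polynomial.le_natDegree_of_ne_zero hne)
  refine Polynomial.natDegree_sum_le_of_forall_le _ _ fun s hs => ?_
  rw [hdeg, Finset.mem_powersetCard_univ.mp hs]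

set_option maxHeartbeats 1000000 in
lemma derivative_Ek (k : ℕ) (hk : 1 ≤ k) (y : Fin n → ℝ) :
    derivative (Ek n k y) = (n - (k-1)) • Ek n (k-1) y := by
  unfold Ek
  calc derivative (∑ s ∈ Finset.univ.powersetCard k, ∏ i ∈ s, (X + C (y i)))
      = ∑ s ∈ Finset.univ.powersetCard k, ∑ j ∈ s, ∏ i ∈ s.erase j, (X + C (y i)) := by
        rw [derivative_sum]
        exact Finset.sum_congr rfl fun s _ => derivative_prod_linear y s
    _ = ∑ A ∈ Finset.univ.powersetCard (k-1), (n - (k-1)) • ∏ i ∈ A, (X + C (y i)) :=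
        sum_erase_reindex k hk (fun A => ∏ i ∈ A, (X + C (y i)))
    _ = (n - (k-1)) • ∑ A ∈ Finset.univ.powersetCard (k-1), ∏ i ∈ A, (X + C (y i)) :=
        (Finset.smul_sum).symm

def RR (p : Polynomial ℝ) : Prop :=
  ∀ z : ℂ, ((p.map (algebraMap ℝ ℂ)).IsRoot z) → z.im = 0

lemma RR_of_nsmul (c : ℕ) (hc : c ≠ 0) (p : Polynomial ℝ) (h : RR (c • p)) : RR p := by
  intro z hz
  apply h z
  show Polynomial.eval z ((c • p).map (algebraMap ℝ ℂ)) = 0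
  rw [nsmul_eq_mul, Polynomial.map_mul, Polynomial.map_natCast, Polynomial.eval_mul,
    Polynomial.eval_natCast, show Polynomial.eval z (p.map (algebraMap ℝ ℂ)) = 0 from hz, mul_zero]

lemma RR_derivative (p : Polynomial ℝ) (hdeg : 1 ≤ p.natDegree) (h : RR p) :
    RR (derivative p) := by
  classical
  set q := p.map (algebraMap ℝ ℂ) with hq
  have hpne : p ≠ 0 := fun h0 => by simp [h0] at hdeg
  have hqne : q ≠ 0 := by
    rw [hq]; exact (Polynomial.map_ne_zero_iff (algebraMap ℝ ℂ).injective).mpr hpne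
  have hqdeg : q.natDegree = p.natDegree := Polynomial.natDegree_map_eq_of_injective
    (algebraMap ℝ ℂ).injective p
  have hsplits : q.Splits := IsAlgClosed.splits q
  have hcardroots : Multiset.card q.roots = q.natDegree := Polynomial.splits_iff_card_roots.mp hsplits
  have hfact := hsplits.eq_prod_roots
  set l : List ℂ := q.roots.toList with hl
  have hlen : l.length = p.natDegree := by rw [hl, Multiset.length_toList, hcardroots, hqdeg]
  have hrootsreal : ∀ i : Fin l.length, (l.get i).im = 0 := by
    intro i
    have hmem : l.get i ∈ q.roots := by
      rw [← Multiset.mem_toList]; exact List.get_mem l i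
    exact h _ ((Polynomial.mem_roots hqne).mp hmem)
  have hprod : q = C q.leadingCoeff * ∏ i : Fin l.length, (X - C (l.get i)) := by
    conv_lhs => rw [hfact]
    congr 1
    have hroots : q.roots = ↑l := (Multiset.coe_toList _).symm
    rw [hroots, Multiset.map_coe, Multiset.prod_coe]
    conv_lhs => rw [← List.ofFn_get l, List.map_ofFn, List.prod_ofFn]
    rfl
  intro z hz
  by_contra hzim
  -- hz : IsRoot of (derivative p).map at z
  have hdq : (derivative p).map (algebraMap ℝ ℂ) = derivative q := (Polynomial.derivative_map p _).symm
  rw [hdq] at hz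
  have hxc : ∀ i : Fin l.length, X - C (l.get i) = X + C (-(l.get i)) := by
    intro i; rw [map_neg, sub_eq_add_neg]
  have hderiv : derivative q = C q.leadingCoeff *
      ∑ j : Fin l.length, ∏ i ∈ Finset.univ.erase j, (X - C (l.get i)) := by
    conv_lhs => rw [hprod]
    rw [derivative_C_mul]
    congr 1
    calc derivative (∏ i : Fin l.length, (X - C (l.get i)))
        = derivative (∏ i : Fin l.length, (X + C (-(l.get i)))) := by
          rw [Finset.prod_congr rfl fun i _ => hxc i]
      _ = ∑ j ∈ Finset.univ, ∏ i ∈ Finset.univ.erase j, (X + C (-(l.get i))) :=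
          derivative_prod_linear _ _
      _ = ∑ j : Fin l.length, ∏ i ∈ Finset.univ.erase j, (X - C (l.get i)) := by
          refine Finset.sum_congr rfl fun j _ => Finset.prod_congr rfl fun i _ => (hxc i).symm
  have hlc : q.leadingCoeff ≠ 0 := Polynomial.leadingCoeff_ne_zero.mpr hqne
  set w : Fin l.length → ℂ := fun i => z - l.get i with hw
  have hwne : ∀ i, w i ≠ 0 := by
    intro i h0
    apply hzim
    have : z = l.get i := by rwa [hw, sub_eq_zero] at h0
    rw [this]; exact hrootsreal i
  have heval : Polynomial.eval z (derivative q)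
      = q.leadingCoeff * ∑ j : Fin l.length, ∏ i ∈ Finset.univ.erase j, w i := by
    rw [hderiv, Polynomial.eval_mul, Polynomial.eval_C]
    congr 1
    rw [Polynomial.eval_finset_sum]
    refine Finset.sum_congr rfl fun j _ => ?_
    rw [Polynomial.eval_prod]
    refine Finset.prod_congr rfl fun i _ => by simp [hw]
  have hzero : q.leadingCoeff * ∑ j : Fin l.length, ∏ i ∈ Finset.univ.erase j, w i = 0 := by
    rw [← heval]; exact hz
  have hNzero : ∑ j : Fin l.length, ∏ i ∈ Finset.univ.erase j, w i = 0 :=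
    (mul_eq_zero.mp hzero).resolve_left hlc
  -- multiply by ∏ conj (w k) and take imaginary parts
  have hkey : (∑ j : Fin l.length, ∏ i ∈ Finset.univ.erase j, w i)
      * ∏ k : Fin l.length, (starRingEnd ℂ) (w k)
      = ∑ j : Fin l.length, (starRingEnd ℂ) (w j) *
          ((∏ i ∈ Finset.univ.erase j, Complex.normSq (w i) : ℝ) : ℂ) := by
    rw [Finset.sum_mul]
    refine Finset.sum_congr rfl fun j _ => ?_
    have hsplit : ∏ k : Fin l.length, (starRingEnd ℂ) (w k)
        = (starRingEnd ℂ) (w j) * ∏ i ∈ Finset.univ.erase j, (starRingEnd ℂ) (w i) :=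
      (Finset.mul_prod_erase _ _ (Finset.mem_univ j)).symm
    rw [hsplit]
    rw [show (∏ i ∈ Finset.univ.erase j, w i) * ((starRingEnd ℂ) (w j)
        * ∏ i ∈ Finset.univ.erase j, (starRingEnd ℂ) (w i))
      = (starRingEnd ℂ) (w j) * ((∏ i ∈ Finset.univ.erase j, w i)
        * ∏ i ∈ Finset.univ.erase j, (starRingEnd ℂ) (w i)) by ring]
    congr 1
    rw [← Finset.prod_mul_distrib]
    push_cast
    refine Finset.prod_congr rfl fun i _ => ?_
    exact Complex.mul_conj (w i)
  have him : ((∑ j : Fin l.length, ∏ i ∈ Finset.univ.erase j, w i)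
      * ∏ k : Fin l.length, (starRingEnd ℂ) (w k)).im
      = -z.im * ∑ j : Fin l.length, ∏ i ∈ Finset.univ.erase j, Complex.normSq (w i) := by
    rw [hkey, Complex.im_sum, Finset.mul_sum]
    refine Finset.sum_congr rfl fun j _ => ?_
    have h1 : ((starRingEnd ℂ) (w j)).im = -z.im := by
      rw [Complex.conj_im]
      have hr := hrootsreal j
      simp only [hw]
      rw [Complex.sub_im, hr, sub_zero]
    rw [Complex.mul_im, h1, Complex.ofReal_im, Complex.ofReal_re, mul_zero, zero_add]
  rw [hNzero, zero_mul] at him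
  have hsum_pos : 0 < ∑ j : Fin l.length, ∏ i ∈ Finset.univ.erase j, Complex.normSq (w i) := by
    have hne : (Finset.univ : Finset (Fin l.length)).Nonempty := by
      rw [Finset.univ_nonempty_iff]
      rw [← Fin.pos_iff_nonempty]
      omega
    refine Finset.sum_pos (fun j _ => Finset.prod_pos fun i _ => Complex.normSq_pos.mpr (hwne i)) hne
  have : z.im = 0 := by
    have h0 : (0:ℝ) = -z.im * ∑ j : Fin l.length, ∏ i ∈ Finset.univ.erase j, Complex.normSq (w i) := him
    nlinarith [hsum_pos]
  exact hzim this


lemma RR_Ek (y : Fin n → ℝ) (k : ℕ) (h1 : 1 ≤ k) (h2 : k ≤ n) : RR (Ek n k y) := by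
  obtain ⟨j, hj⟩ : ∃ j, n - k = j := ⟨_, rfl⟩
  induction j generalizing k with
  | zero =>
      have hk : k = n := by omega
      subst hk
      intro z hz
      have huniv : (Finset.univ : Finset (Fin k)).powersetCard k = {Finset.univ} := by
        have h := Finset.powersetCard_self (Finset.univ : Finset (Fin k))
        simpa using h
      unfold Ek at hz
      rw [huniv, Finset.sum_singleton] at hz
      have : Polynomial.eval z ((∏ i : Fin k, (X + C (y i))).map (algebraMap ℝ ℂ)) = 0 := hz
      rw [Polynomial.map_prod, Polynomial.eval_prod] at this
      obtain ⟨i, -, hi⟩ := Finset.prod_eq_zero_iff.mp this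
      simp only [Polynomial.map_add, Polynomial.map_X, Polynomial.map_C, Polynomial.eval_add,
        Polynomial.eval_X, Polynomial.eval_C] at hi
      have : z = -(algebraMap ℝ ℂ) (y i) := by linear_combination hi
      rw [this]
      simp
  | succ j ih =>
      have hk1 : k + 1 ≤ n := by omega
      have hder := derivative_Ek (k+1) (by omega) y
      have hRR : RR (Ek n (k+1) y) := ih (k+1) (by omega) hk1 (by omega)
      have : RR (derivative (Ek n (k+1) y)) := by
        apply RR_derivative _ _ hRR
        rw [natDegree_Ek (k+1) hk1 y]; omega
      rw [hder] at this
      have hsimp : k + 1 - 1 = k := by omega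
      rw [hsimp] at this
      exact RR_of_nsmul _ (by omega) _ this

lemma fact1 (hm : 1 ≤ m) (hmn : m ≤ n) (y : Fin n → ℝ) (z : ℂ) (hz : z.im ≠ 0) :
    (∑ s ∈ Finset.univ.powersetCard m, ∏ i ∈ s, ((y i : ℂ) + z)) ≠ 0 := by
  intro h0
  apply hz
  apply RR_Ek y m hm hmn z
  show Polynomial.eval z ((Ek n m y).map (algebraMap ℝ ℂ)) = 0
  unfold Ek
  rw [Polynomial.map_sum, Polynomial.eval_finset_sum]
  rw [← h0]
  refine Finset.sum_congr rfl fun s _ => ?_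
  rw [Polynomial.map_prod, Polynomial.eval_prod]
  refine Finset.prod_congr rfl fun i _ => ?_
  simp [add_comm]

lemma eval_Ek (k : ℕ) (y : Fin n → ℝ) (T : ℝ) :
    Polynomial.eval T (Ek n k y) = esymmS n k (fun i => y i + T) := by
  unfold Ek esymmS
  rw [Polynomial.eval_finset_sum]
  refine Finset.sum_congr rfl fun s _ => ?_
  rw [Polynomial.eval_prod]
  refine Finset.prod_congr rfl fun i _ => by simp [add_comm]

/-- positivity of shifted elementary symmetric functions on the cone -/
lemma esymm_shift_pos (lam : Fin n → ℝ) (hlam : GammaCone n m lam) (hmn : m ≤ n)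
    (j : ℕ) (hj : j ≤ m) (T : ℝ) (hT : 0 ≤ T) :
    0 < esymmS n j (fun i => lam i + T) := by
  induction j generalizing T with
  | zero =>
      unfold esymmS
      rw [Finset.powersetCard_zero, Finset.sum_singleton]
      simp
  | succ j ih =>
      have hjm : j ≤ m := by omega
      set f : ℝ → ℝ := fun t => Polynomial.eval t (Ek n (j+1) lam) with hf
      have hf0 : 0 < f 0 := by
        rw [hf]
        simp only []
        rw [eval_Ek]
        have : (fun i => lam i + 0) = lam := by funext i; ring
        rw [this]
        exact hlam (j+1) (by omega) (by omega)
      have hderiv : ∀ t : ℝ, HasDerivAt f ((n - j : ℕ) * Polynomial.eval t (Ek n j lam)) t := by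
        intro t
        have h1 := Polynomial.hasDerivAt (Ek n (j+1) lam) t
        have h2 : Polynomial.eval t (derivative (Ek n (j+1) lam))
            = (n - j : ℕ) * Polynomial.eval t (Ek n j lam) := by
          rw [derivative_Ek (j+1) (by omega) lam]
          have hsimp : j + 1 - 1 = j := by omega
          rw [hsimp]
          simp [Polynomial.eval_smul]
      -- monotonicity on [0, T]
        rwa [h2] at h1
      have hmono : MonotoneOn f (Set.Ici (0:ℝ)) := by
        apply monotoneOn_of_deriv_nonneg (convex_Ici 0)
          ((Ek n (j+1) lam).continuous).continuousOn
          (fun t _ => (hderiv t).differentiableAt.differentiableWithinAt)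
        intro t ht
        rw [(hderiv t).deriv]
        have ht' : 0 < t := by simpa using ht
        have hpos := ih hjm t ht'.le
        rw [← eval_Ek] at hpos
        positivity
      have : f 0 ≤ f T := hmono (by simp) (by simpa using hT) hT
      have hpos : 0 < f T := lt_of_lt_of_le hf0 this
      have : f T = esymmS n (j+1) (fun i => lam i + T) := eval_Ek (j+1) lam T
      rwa [this] at hpos

lemma Gamma_shift (lam : Fin n → ℝ) (hlam : GammaCone n m lam) (hmn : m ≤ n)
    (T : ℝ) (hT : 0 ≤ T) : GammaCone n m (fun i => lam i + T) :=
  fun j h1 h2 => esymm_shift_pos lam hlam hmn j h2 T hT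


lemma tendsto_esC_seq {v : ℕ → Fin n → ℂ} {v' : Fin n → ℂ}
    (hv : ∀ i, Tendsto (fun k => v k i) atTop (nhds (v' i))) (kk : ℕ) :
    Tendsto (fun k => esC n kk (v k)) atTop (nhds (esC n kk v')) := by
  unfold esC
  apply tendsto_finset_sum; intro s _
  exact tendsto_finset_prod s fun i _ => hv i

lemma tendsto_cf_seq {v u : ℕ → Fin n → ℂ} {v' u' : Fin n → ℂ}
    (hv : ∀ i, Tendsto (fun k => v k i) atTop (nhds (v' i)))
    (hu : ∀ i, Tendsto (fun k => u k i) atTop (nhds (u' i))) (j : ℕ) :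
    Tendsto (fun k => cf n m j (v k) (u k)) atTop (nhds (cf n m j v' u')) := by
  unfold cf
  apply tendsto_finset_sum; intro s _
  apply tendsto_finset_sum; intro A _
  exact (tendsto_finset_prod A fun i _ => hu i).mul (tendsto_finset_prod _ fun i _ => hv i)

lemma tendsto_Qc_seq {v u : ℕ → Fin n → ℂ} {v' u' : Fin n → ℂ} {z : ℕ → ℂ} {z' : ℂ}
    (hv : ∀ i, Tendsto (fun k => v k i) atTop (nhds (v' i)))
    (hu : ∀ i, Tendsto (fun k => u k i) atTop (nhds (u' i)))
    (hz : Tendsto z atTop (nhds z')) :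
    Tendsto (fun k => Qc n m (v k) (u k) (z k)) atTop (nhds (Qc n m v' u' z')) := by
  unfold Qc
  apply tendsto_finset_sum; intro s _
  exact tendsto_finset_prod s fun i _ => (hv i).add ((hu i).mul hz)

/-- eventual uniform bound on roots along convergent coefficient sequences -/
lemma eventual_root_bound (hm : 1 ≤ m)
    (v u : ℕ → Fin n → ℂ) (v' u' : Fin n → ℂ)
    (hv : ∀ i, Tendsto (fun k => v k i) atTop (nhds (v' i)))
    (hu : ∀ i, Tendsto (fun k => u k i) atTop (nhds (u' i)))
    (hu' : esC n m u' ≠ 0) :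
    ∃ B : ℝ, ∀ᶠ k in atTop, ∀ z : ℂ, Qc n m (v k) (u k) z = 0 → ‖z‖ ≤ B := by
  set S' := ∑ j ∈ Finset.range m, ‖cf n m j v' u'‖ with hS'
  set L' := ‖esC n m u'‖ with hL'
  have hL'pos : 0 < L' := norm_pos_iff.mpr hu'
  refine ⟨1 + (S' + 1) / (L' / 2), ?_⟩
  have hSten : Tendsto (fun k => ∑ j ∈ Finset.range m, ‖cf n m j (v k) (u k)‖) atTop
      (nhds S') := by
    apply tendsto_finset_sum
    intro j _
    exact (tendsto_cf_seq hv hu j).norm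
  have hLten : Tendsto (fun k => ‖esC n m (u k)‖) atTop (nhds L') :=
    (tendsto_esC_seq hu m).norm
  have hSev : ∀ᶠ k in atTop, ∑ j ∈ Finset.range m, ‖cf n m j (v k) (u k)‖ ≤ S' + 1 :=
    hSten.eventually (eventually_le_nhds (by linarith))
  have hLev : ∀ᶠ k in atTop, L' / 2 ≤ ‖esC n m (u k)‖ :=
    hLten.eventually (eventually_ge_nhds (by linarith))
  filter_upwards [hSev, hLev] with k hS hL
  intro z hz
  have huk : esC n m (u k) ≠ 0 := by
    intro h0; rw [h0] at hL; simp at hL; linarith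
  have hb := root_bound hm (v k) (u k) huk z hz
  have hSnn : 0 ≤ S' := Finset.sum_nonneg fun _ _ => norm_nonneg _
  have h2 : (∑ j ∈ Finset.range m, ‖cf n m j (v k) (u k)‖) / ‖esC n m (u k)‖
      ≤ (S' + 1) / (L' / 2) := by
    apply div_le_div₀ (by linarith) hS (by linarith) hL
  linarith

/-- cluster point of single roots is a root of the limit -/
lemma roots_compactness (hm : 1 ≤ m)
    (v u : ℕ → Fin n → ℂ) (v' u' : Fin n → ℂ)
    (hv : ∀ i, Tendsto (fun k => v k i) atTop (nhds (v' i)))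
    (hu : ∀ i, Tendsto (fun k => u k i) atTop (nhds (u' i)))
    (hu' : esC n m u' ≠ 0)
    (z : ℕ → ℂ) (hroot : ∀ k, Qc n m (v k) (u k) (z k) = 0) :
    ∃ (φ : ℕ → ℕ) (z' : ℂ), StrictMono φ ∧ Tendsto (z ∘ φ) atTop (nhds z') ∧
      Qc n m v' u' z' = 0 := by
  obtain ⟨B, hB⟩ := eventual_root_bound hm v u v' u' hv hu hu'
  obtain ⟨K₀, hK₀⟩ := eventually_atTop.mp hB
  have hmem : ∀ k : ℕ, z (k + K₀) ∈ Metric.closedBall (0:ℂ) B := by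
    intro k
    rw [Metric.mem_closedBall, dist_zero_right]
    exact hK₀ (k + K₀) (by omega) _ (hroot _)
  obtain ⟨z', -, φ, hφ, hten⟩ :=
    (isCompact_closedBall (0:ℂ) B).tendsto_subseq hmem
  have hψ : Tendsto (fun k => φ k + K₀) atTop atTop :=
    (tendsto_add_atTop_nat K₀).comp hφ.tendsto_atTop
  refine ⟨fun k => φ k + K₀, z', fun a b hab => Nat.add_lt_add_right (hφ hab) K₀, hten, ?_⟩
  have h1 : Tendsto (fun k => Qc n m (v (φ k + K₀)) (u (φ k + K₀)) (z (φ k + K₀))) atTop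
      (nhds (Qc n m v' u' z')) :=
    tendsto_Qc_seq (fun i => (hv i).comp hψ) (fun i => (hu i).comp hψ) hten
  have h2 : Tendsto (fun k => Qc n m (v (φ k + K₀)) (u (φ k + K₀)) (z (φ k + K₀))) atTop
      (nhds 0) := by
    have heq : (fun k => Qc n m (v (φ k + K₀)) (u (φ k + K₀)) (z (φ k + K₀))) = fun _ => 0 := by
      funext k; exact hroot _
    rw [heq]; exact tendsto_const_nhds
  exact tendsto_nhds_unique h1 h2

/-- limits of factorizations -/
lemma factorization_limit (hm : 1 ≤ m)
    (v u : ℕ → Fin n → ℂ) (v' u' : Fin n → ℂ)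
    (hv : ∀ i, Tendsto (fun k => v k i) atTop (nhds (v' i)))
    (hu : ∀ i, Tendsto (fun k => u k i) atTop (nhds (u' i)))
    (hu' : esC n m u' ≠ 0)
    (z : ℕ → Fin m → ℂ)
    (hfac : ∀ k (ζ : ℂ), Qc n m (v k) (u k) ζ = esC n m (u k) * ∏ i, (ζ - z k i)) :
    ∃ (φ : ℕ → ℕ) (z' : Fin m → ℂ), StrictMono φ ∧
      (∀ i, Tendsto (fun k => z (φ k) i) atTop (nhds (z' i))) ∧
      ∀ ζ : ℂ, Qc n m v' u' ζ = esC n m u' * ∏ i, (ζ - z' i) := by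
  obtain ⟨B, hB⟩ := eventual_root_bound hm v u v' u' hv hu hu'
  obtain ⟨K₀, hK₀⟩ := eventually_atTop.mp hB
  have hroot : ∀ k i, Qc n m (v k) (u k) (z k i) = 0 := by
    intro k i
    rw [hfac k (z k i)]
    rw [Finset.prod_eq_zero (Finset.mem_univ i) (by ring)]
    ring
  have hmem : ∀ k : ℕ, z (k + K₀) ∈ Metric.closedBall (0 : Fin m → ℂ) B := by
    intro k
    rw [Metric.mem_closedBall, dist_zero_right]
    have hB' : 0 ≤ B := by
      have := hK₀ (k + K₀) (by omega) _ (hroot (k + K₀) ⟨0, hm⟩)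
      exact le_trans (norm_nonneg _) this
    rw [pi_norm_le_iff_of_nonneg hB']
    intro i
    exact hK₀ (k + K₀) (by omega) _ (hroot _ i)
  obtain ⟨z', -, φ, hφ, hten⟩ :=
    (isCompact_closedBall (0 : Fin m → ℂ) B).tendsto_subseq hmem
  have hψ : Tendsto (fun k => φ k + K₀) atTop atTop :=
    (tendsto_add_atTop_nat K₀).comp hφ.tendsto_atTop
  have htenc : ∀ i, Tendsto (fun k => z (φ k + K₀) i) atTop (nhds (z' i)) := by
    intro i
    have := (tendsto_pi_nhds.mp hten) i
    exact this
  refine ⟨fun k => φ k + K₀, z', fun a b hab => Nat.add_lt_add_right (hφ hab) K₀, htenc, ?_⟩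
  intro ζ
  have h1 : Tendsto (fun k => Qc n m (v (φ k + K₀)) (u (φ k + K₀)) ζ) atTop
      (nhds (Qc n m v' u' ζ)) :=
    tendsto_Qc_seq (fun i => (hv i).comp hψ) (fun i => (hu i).comp hψ) tendsto_const_nhds
  have h2 : Tendsto (fun k => Qc n m (v (φ k + K₀)) (u (φ k + K₀)) ζ) atTop
      (nhds (esC n m u' * ∏ i, (ζ - z' i))) := by
    have heq : (fun k => Qc n m (v (φ k + K₀)) (u (φ k + K₀)) ζ)
        = fun k => esC n m (u (φ k + K₀)) * ∏ i, (ζ - z (φ k + K₀) i) := by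
      funext k; exact hfac _ ζ
    rw [heq]
    apply Tendsto.mul
    · exact tendsto_esC_seq (fun i => (hu i).comp hψ) m
    · apply tendsto_finset_prod
      intro i _
      exact Tendsto.sub tendsto_const_nhds (htenc i)
  exact tendsto_nhds_unique h1 h2


/-- shifted direction vector -/
noncomputable def Uf {n : ℕ} (lam : Fin n → ℝ) (T : ℝ) : Fin n → ℂ :=
  fun i => ((lam i + T : ℝ) : ℂ)

lemma esC_Uf_ne (hm : 1 ≤ m) (hmn : m ≤ n) (lam : Fin n → ℝ) (hlam : GammaCone n m lam)
    (T : ℝ) (hT : 0 ≤ T) : esC n m (Uf lam T) ≠ 0 := by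
  have hpos := esymm_shift_pos lam hlam hmn m le_rfl T hT
  have h2 : esC n m (Uf lam T) = ((esymmS n m (fun i => lam i + T) : ℝ) : ℂ) :=
    esC_real m (fun i => lam i + T)
  rw [h2]
  exact_mod_cast hpos.ne'

lemma esC_ones (hmn : m ≤ n) : esC n m (fun _ => (1:ℂ)) = (n.choose m : ℂ) := by
  unfold esC
  simp only [Finset.prod_const_one, Finset.sum_const, Finset.card_powersetCard,
    Finset.card_univ, Fintype.card_fin, nsmul_eq_mul, mul_one]

lemma tendsto_Uf (lam : Fin n → ℝ) {Ts : ℕ → ℝ} {β : ℝ} (hT : Tendsto Ts atTop (nhds β)) :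
    ∀ i, Tendsto (fun k => Uf lam (Ts k) i) atTop (nhds (Uf lam β i)) := by
  intro i
  unfold Uf
  exact (Complex.continuous_ofReal.tendsto _).comp (tendsto_const_nhds.add hT)

/-- Stage A: roots in direction `lam + T` with imaginary shift `ε I` lie in the lower half plane -/
lemma stageA (hm : 1 ≤ m) (hmn : m ≤ n) (lam x : Fin n → ℝ) (hlam : GammaCone n m lam)
    (ε : ℝ) (hε : 0 < ε) :
    ∀ T : ℝ, 0 ≤ T → ∀ ζ : ℂ,
      Qc n m (fun i => (x i : ℂ) + ε * I) (Uf lam T) ζ = 0 → ζ.im < 0 := by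
  set v : Fin n → ℂ := fun i => (x i : ℂ) + ε * I with hv
  -- no root is ever real
  have hexcl : ∀ T : ℝ, 0 ≤ T → ∀ ζ : ℂ, Qc n m v (Uf lam T) ζ = 0 → ζ.im ≠ 0 := by
    intro T hT ζ h0 him
    have hζ : ζ = (ζ.re : ℂ) := by
      apply Complex.ext
      · simp
      · simp [him]
    rw [hζ] at h0
    apply fact1 hm hmn (fun i => x i + (lam i + T) * ζ.re) (ε * I)
      (by simp [hε.ne'])
    rw [← h0]
    unfold Qc Uf
    refine Finset.sum_congr rfl fun s _ => Finset.prod_congr rfl fun i _ => ?_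
    rw [hv]
    push_cast
    ring
  -- for large T there is no bad root
  have hlarge : ∃ M : ℝ, ∀ T : ℝ, M ≤ T → ∀ ζ : ℂ, Qc n m v (Uf lam T) ζ = 0 → ζ.im < 0 := by
    by_contra hcon
    push_neg at hcon
    have hcon' : ∀ k : ℕ, ∃ T, (k+1 : ℝ) ≤ T ∧ ∃ ζ, Qc n m v (Uf lam T) ζ = 0 ∧ 0 ≤ ζ.im := by
      intro k
      obtain ⟨T, hT1, ζ, h0, him⟩ := hcon (k+1 : ℝ)
      exact ⟨T, hT1, ζ, h0, him⟩
    choose T hT1 ζs hroot2 him2 using hcon'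
    have hTpos : ∀ k : ℕ, (0:ℝ) < T k := fun k => lt_of_lt_of_le (by positivity) (hT1 k)
    set u2 : ℕ → Fin n → ℂ := fun k i => 1 + (lam i : ℂ) * (((T k)⁻¹ : ℝ) : ℂ) with hu2
    set ξ : ℕ → ℂ := fun k => ((T k : ℝ) : ℂ) * ζs k with hξ
    have hroot3 : ∀ k, Qc n m v (u2 k) (ξ k) = 0 := by
      intro k
      rw [← hroot2 k]
      unfold Qc Uf
      refine Finset.sum_congr rfl fun s _ => Finset.prod_congr rfl fun i _ => ?_
      rw [hu2, hξ]
      have hTne : ((T k : ℝ) : ℂ) ≠ 0 := by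
        exact_mod_cast (hTpos k).ne'
      push_cast
      field_simp
      ring
    have hTatTop : Tendsto T atTop atTop := by
      apply tendsto_atTop_mono hT1
      apply tendsto_atTop_add_const_right
      exact tendsto_natCast_atTop_atTop
    have hinv : Tendsto (fun k => (T k)⁻¹) atTop (nhds 0) :=
      tendsto_inv_atTop_zero.comp hTatTop
    have hinvC : Tendsto (fun k => (((T k)⁻¹ : ℝ) : ℂ)) atTop (nhds ((0:ℝ) : ℂ)) :=
      (Complex.continuous_ofReal.tendsto (0:ℝ)).comp hinv
    have hu2ten : ∀ i, Tendsto (fun k => u2 k i) atTop (nhds ((fun _ => (1:ℂ)) i)) := by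
      intro i
      rw [hu2]
      have h3 : Tendsto (fun k => 1 + (lam i : ℂ) * (((T k)⁻¹ : ℝ) : ℂ)) atTop
          (nhds (1 + (lam i : ℂ) * ((0:ℝ) : ℂ))) :=
        tendsto_const_nhds.add (tendsto_const_nhds.mul hinvC)
      simpa using h3
    have hones : esC n m (fun _ => (1:ℂ)) ≠ 0 := by
      rw [esC_ones hmn]
      exact_mod_cast (Nat.choose_pos hmn).ne'
    obtain ⟨φ, ξ', hφ, hξten, hξroot⟩ := roots_compactness hm (fun _ => v) u2 v (fun _ => (1:ℂ))
      (fun i => tendsto_const_nhds) hu2ten hones ξ hroot3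
    have hξ'im : 0 ≤ ξ'.im := by
      apply ge_of_tendsto' ((Complex.continuous_im.tendsto ξ').comp hξten)
      intro k
      show 0 ≤ (ξ (φ k)).im
      rw [hξ]
      show 0 ≤ (((T (φ k) : ℝ) : ℂ) * ζs (φ k)).im
      rw [Complex.mul_im]
      simp only [Complex.ofReal_re, Complex.ofReal_im, zero_mul, add_zero]
      exact mul_nonneg (hTpos _).le (him2 _)
    apply fact1 hm hmn x (ε * I + ξ')
      (by simp only [Complex.add_im, Complex.mul_im, Complex.ofReal_re, Complex.I_im,
            Complex.ofReal_im, Complex.I_re, mul_zero, mul_one, zero_add]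
          intro h; rw [← h] at hξ'im; nlinarith)
    rw [← hξroot]
    unfold Qc
    refine Finset.sum_congr rfl fun s _ => Finset.prod_congr rfl fun i _ => ?_
    rw [hv]
    ring
  -- main argument via the supremum
  intro T hT ζ hroot
  by_contra hfin
  push_neg at hfin
  set Bad : Set ℝ := {T' | 0 ≤ T' ∧ ∃ ζ', Qc n m v (Uf lam T') ζ' = 0 ∧ 0 ≤ ζ'.im} with hBad
  have hne : Bad.Nonempty := ⟨T, hT, ζ, hroot, hfin⟩
  obtain ⟨M, hM⟩ := hlarge
  have hbdd : BddAbove Bad := by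
    refine ⟨M, fun T' hT' => ?_⟩
    by_contra hgt
    push_neg at hgt
    obtain ⟨-, ζ', h0, him⟩ := hT'
    exact absurd (hM T' hgt.le ζ' h0) (not_lt.mpr him)
  set β := sSup Bad with hβ
  have hβ0 : 0 ≤ β := by
    obtain ⟨T₀, hT₀⟩ := hne
    exact le_trans hT₀.1 (le_csSup hbdd hT₀)
  -- β itself is in Bad
  have hβBad : β ∈ Bad := by
    have hseq : ∀ k : ℕ, ∃ T', T' ∈ Bad ∧ β - 1/(k+1) < T' ∧ T' ≤ β := by
      intro k
      have hlt : β - 1/(k+1) < β := by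
        have : (0:ℝ) < 1/(k+1) := by positivity
        linarith
      obtain ⟨T', hT', hgt⟩ := exists_lt_of_lt_csSup hne hlt
      exact ⟨T', hT', hgt, le_csSup hbdd hT'⟩
    choose Ts hTs hTgt hTle using hseq
    have hTten : Tendsto Ts atTop (nhds β) := by
      have hlow : Tendsto (fun k : ℕ => β - 1/(k+1 : ℝ)) atTop (nhds (β - 0)) :=
        tendsto_const_nhds.sub tendsto_one_div_add_atTop_nhds_zero_nat
      rw [sub_zero] at hlow
      exact tendsto_of_tendsto_of_tendsto_of_le_of_le hlow tendsto_const_nhds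
        (fun k => (hTgt k).le) hTle
    choose ζs hζ0 hζim using fun k => (hTs k).2
    obtain ⟨φ, ζ', hφ, hζten, hζroot⟩ := roots_compactness hm (fun _ => v) (fun k => Uf lam (Ts k))
      v (Uf lam β) (fun i => tendsto_const_nhds) (tendsto_Uf lam hTten)
      (esC_Uf_ne hm hmn lam hlam β hβ0) ζs hζ0
    refine ⟨hβ0, ζ', hζroot, ?_⟩
    apply ge_of_tendsto' ((Complex.continuous_im.tendsto ζ').comp hζten)
    intro k
    exact hζim (φ k)
  obtain ⟨-, ζ₀, hζ₀, hζ₀im⟩ := hβBad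
  -- factorizations just above β have all roots in the open lower half plane
  have hβk : ∀ k : ℕ, (0:ℝ) ≤ β + 1/(k+1) := by
    intro k
    have : (0:ℝ) < 1/(k+1) := by positivity
    linarith
  have hfac0 : ∀ k : ℕ, ∃ zz : Fin m → ℂ, ∀ ζ' : ℂ,
      Qc n m v (Uf lam (β + 1/(k+1))) ζ' = esC n m (Uf lam (β + 1/(k+1))) * ∏ i, (ζ' - zz i) :=
    fun k => exists_roots hm v _ (esC_Uf_ne hm hmn lam hlam _ (hβk k))
  choose zz hzz using hfac0
  have hznotin : ∀ k : ℕ, (β + 1/(k+1)) ∉ Bad := by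
    intro k hmem
    have hle := le_csSup hbdd hmem
    have : (0:ℝ) < 1/(k+1) := by positivity
    rw [← hβ] at hle
    linarith
  have hzneg : ∀ k i, (zz k i).im < 0 := by
    intro k i
    have hrootz : Qc n m v (Uf lam (β + 1/(k+1))) (zz k i) = 0 := by
      rw [hzz k (zz k i), Finset.prod_eq_zero (Finset.mem_univ i) (by ring), mul_zero]
    by_contra hge
    push_neg at hge
    exact hznotin k ⟨hβk k, zz k i, hrootz, hge⟩
  have hTten2 : Tendsto (fun k : ℕ => β + 1/(k+1 : ℝ)) atTop (nhds β) := by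
    have h4 : Tendsto (fun k : ℕ => β + 1/(k+1 : ℝ)) atTop (nhds (β + 0)) :=
      tendsto_const_nhds.add tendsto_one_div_add_atTop_nhds_zero_nat
    rwa [add_zero] at h4
  obtain ⟨φ, z', hφ, hzten, hfac'⟩ := factorization_limit hm (fun _ => v)
    (fun k => Uf lam (β + 1/(k+1))) v (Uf lam β) (fun i => tendsto_const_nhds)
    (tendsto_Uf lam hTten2) (esC_Uf_ne hm hmn lam hlam β hβ0) zz (fun k => hzz k)
  have him' : ∀ i, (z' i).im ≤ 0 := by
    intro i
    apply le_of_tendsto' ((Complex.continuous_im.tendsto (z' i)).comp (hzten i))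
    intro k
    exact (hzneg (φ k) i).le
  have h0 : esC n m (Uf lam β) * ∏ i, (ζ₀ - z' i) = 0 := by rw [← hfac' ζ₀, hζ₀]
  have hprod0 : ∏ i, (ζ₀ - z' i) = 0 :=
    (mul_eq_zero.mp h0).resolve_left (esC_Uf_ne hm hmn lam hlam β hβ0)
  obtain ⟨i, -, hi⟩ := Finset.prod_eq_zero_iff.mp hprod0
  have hζz : ζ₀ = z' i := by linear_combination hi
  have him0 : ζ₀.im = 0 := le_antisymm (hζz ▸ him' i) hζ₀im
  exact hexcl β hβ0 ζ₀ hζ₀ him0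


lemma Qc_conj (x lam : Fin n → ℝ) (ζ : ℂ) :
    Qc n m (fun i => (x i:ℂ)) (fun i => (lam i:ℂ)) ((starRingEnd ℂ) ζ)
      = (starRingEnd ℂ) (Qc n m (fun i => (x i:ℂ)) (fun i => (lam i:ℂ)) ζ) := by
  unfold Qc
  rw [map_sum]
  refine Finset.sum_congr rfl fun s _ => ?_
  rw [map_prod]
  refine Finset.prod_congr rfl fun i _ => ?_
  simp [Complex.conj_ofReal]

lemma esC_lam_ne (hm : 1 ≤ m) (lam : Fin n → ℝ) (hlam : GammaCone n m lam) :
    esC n m (fun i => (lam i : ℂ)) ≠ 0 := by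
  rw [esC_real m lam]
  exact_mod_cast (hlam m hm le_rfl).ne'

lemma Uf_zero (lam : Fin n → ℝ) : Uf lam 0 = fun i => (lam i : ℂ) := by
  funext i; unfold Uf; norm_num

/-- Stage B: all roots in a cone direction are real -/
lemma stageB (hm : 1 ≤ m) (hmn : m ≤ n) (lam x : Fin n → ℝ) (hlam : GammaCone n m lam) :
    ∃ r : Fin m → ℝ, ∀ ζ : ℂ,
      Qc n m (fun i => (x i : ℂ)) (fun i => (lam i : ℂ)) ζ
        = esC n m (fun i => (lam i : ℂ)) * ∏ i, (ζ - (r i : ℂ)) := by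
  set lamC : Fin n → ℂ := fun i => (lam i : ℂ) with hlamC
  have hlamne : esC n m lamC ≠ 0 := esC_lam_ne hm lam hlam
  set v : ℕ → Fin n → ℂ := fun k i => (x i : ℂ) + ((1/(k+1:ℝ) : ℝ) : ℂ) * I with hvdef
  have hfac0 : ∀ k : ℕ, ∃ zz : Fin m → ℂ, ∀ ζ : ℂ,
      Qc n m (v k) lamC ζ = esC n m lamC * ∏ i, (ζ - zz i) :=
    fun k => exists_roots hm (v k) lamC hlamne
  choose zz hzz using hfac0
  have hzneg : ∀ k i, (zz k i).im < 0 := by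
    intro k i
    have hroot : Qc n m (v k) lamC (zz k i) = 0 := by
      rw [hzz k (zz k i), Finset.prod_eq_zero (Finset.mem_univ i) (by ring), mul_zero]
    have := stageA hm hmn lam x hlam (1/(k+1:ℝ)) (by positivity) 0 le_rfl (zz k i)
    rw [Uf_zero lam] at this
    exact this hroot
  have hvten : ∀ i, Tendsto (fun k => v k i) atTop (nhds ((x i : ℂ))) := by
    intro i
    have hinv : Tendsto (fun k : ℕ => 1/(k+1:ℝ)) atTop (nhds 0) :=
      tendsto_one_div_add_atTop_nhds_zero_nat
    have hinvC : Tendsto (fun k : ℕ => ((1/(k+1:ℝ) : ℝ) : ℂ)) atTop (nhds ((0:ℝ):ℂ)) :=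
      (Complex.continuous_ofReal.tendsto (0:ℝ)).comp hinv
    have h3 : Tendsto (fun k : ℕ => (x i : ℂ) + ((1/(k+1:ℝ) : ℝ) : ℂ) * I) atTop
        (nhds ((x i : ℂ) + ((0:ℝ):ℂ) * I)) :=
      tendsto_const_nhds.add (hinvC.mul tendsto_const_nhds)
    simp only [hvdef]
    simpa using h3
  obtain ⟨φ, z', hφ, hzten, hfac'⟩ := factorization_limit hm v (fun _ => lamC)
    (fun i => (x i : ℂ)) lamC hvten (fun i => tendsto_const_nhds) hlamne zz (fun k => hzz k)
  have him' : ∀ i, (z' i).im ≤ 0 := by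
    intro i
    apply le_of_tendsto' ((Complex.continuous_im.tendsto (z' i)).comp (hzten i))
    intro k
    exact (hzneg (φ k) i).le
  have hreal : ∀ i, (z' i).im = 0 := by
    intro i
    by_contra hne
    have hlt : (z' i).im < 0 := lt_of_le_of_ne (him' i) hne
    have hrooti : Qc n m (fun i => (x i : ℂ)) lamC (z' i) = 0 := by
      rw [hfac' (z' i), Finset.prod_eq_zero (Finset.mem_univ i) (by ring), mul_zero]
    have hrootc : Qc n m (fun i => (x i : ℂ)) lamC ((starRingEnd ℂ) (z' i)) = 0 := by
      rw [hlamC, Qc_conj, hrooti, map_zero]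
    rw [hfac' ((starRingEnd ℂ) (z' i))] at hrootc
    have hprod0 : ∏ j, ((starRingEnd ℂ) (z' i) - z' j) = 0 :=
      (mul_eq_zero.mp hrootc).resolve_left hlamne
    obtain ⟨j, -, hj⟩ := Finset.prod_eq_zero_iff.mp hprod0
    have hconj : (starRingEnd ℂ) (z' i) = z' j := by linear_combination hj
    have : (z' j).im = -(z' i).im := by rw [← hconj, Complex.conj_im]
    have : (z' j).im > 0 := by rw [this]; linarith
    linarith [him' j]
  refine ⟨fun i => (z' i).re, fun ζ => ?_⟩
  have hz'eq : ∀ i, z' i = ((z' i).re : ℂ) := by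
    intro i
    apply Complex.ext
    · simp
    · simp [hreal i]
  rw [hfac' ζ]
  congr 1
  refine Finset.prod_congr rfl fun i _ => ?_
  rw [← hz'eq i]

/-- Stage C auxiliary: all roots have negative real part -/
lemma stageC_aux (hm : 1 ≤ m) (hmn : m ≤ n) (lam mu : Fin n → ℝ)
    (hlam : GammaCone n m lam) (hmu : GammaCone n m mu) :
    ∀ T : ℝ, 0 ≤ T → ∀ ζ : ℂ,
      Qc n m (fun i => (mu i : ℂ)) (Uf lam T) ζ = 0 → ζ.re < 0 := by
  have hmune : esC n m (fun i => (mu i : ℂ)) ≠ 0 := esC_lam_ne hm mu hmu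
  -- no root has zero real part
  have hexcl : ∀ T : ℝ, 0 ≤ T → ∀ ζ : ℂ,
      Qc n m (fun i => (mu i : ℂ)) (Uf lam T) ζ = 0 → ζ.re ≠ 0 := by
    intro T hT ζ h0 hre
    unfold Uf at h0
    obtain ⟨r, hr⟩ := stageB hm hmn (fun i => lam i + T) mu (Gamma_shift lam hlam hmn T hT)
    have hne := esC_Uf_ne hm hmn lam hlam T hT
    unfold Uf at hne
    have h0' := h0
    rw [hr ζ] at h0'
    have hprod0 : ∏ i, (ζ - (r i : ℂ)) = 0 := (mul_eq_zero.mp h0').resolve_left hne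
    obtain ⟨i, -, hi⟩ := Finset.prod_eq_zero_iff.mp hprod0
    have hζr : ζ = (r i : ℂ) := by linear_combination hi
    have hζ0 : ζ = 0 := by
      rw [hζr] at hre ⊢
      simp only [Complex.ofReal_re] at hre
      simp [hre]
    rw [hζ0] at h0
    have hQ0 : Qc n m (fun i => (mu i : ℂ)) (fun i => ((lam i + T : ℝ) : ℂ)) 0
        = esC n m (fun i => (mu i : ℂ)) := by
      unfold Qc esC; simp
    rw [hQ0] at h0
    exact hmune h0
  -- for large T there is no bad root
  have hlarge : ∃ M : ℝ, ∀ T : ℝ, M ≤ T → ∀ ζ : ℂ,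
      Qc n m (fun i => (mu i : ℂ)) (Uf lam T) ζ = 0 → ζ.re < 0 := by
    by_contra hcon
    push_neg at hcon
    have hcon' : ∀ k : ℕ, ∃ T, (k+1 : ℝ) ≤ T ∧ ∃ ζ,
        Qc n m (fun i => (mu i : ℂ)) (Uf lam T) ζ = 0 ∧ 0 ≤ ζ.re := by
      intro k
      obtain ⟨T, hT1, ζ, h0, hre⟩ := hcon (k+1 : ℝ)
      exact ⟨T, hT1, ζ, h0, hre⟩
    choose T hT1 ζs hroot2 hre2 using hcon'
    have hTpos : ∀ k : ℕ, (0:ℝ) < T k := fun k => lt_of_lt_of_le (by positivity) (hT1 k)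
    set u2 : ℕ → Fin n → ℂ := fun k i => 1 + (lam i : ℂ) * (((T k)⁻¹ : ℝ) : ℂ) with hu2
    set ξ : ℕ → ℂ := fun k => ((T k : ℝ) : ℂ) * ζs k with hξ
    have hroot3 : ∀ k, Qc n m (fun i => (mu i : ℂ)) (u2 k) (ξ k) = 0 := by
      intro k
      rw [← hroot2 k]
      unfold Qc Uf
      refine Finset.sum_congr rfl fun s _ => Finset.prod_congr rfl fun i _ => ?_
      rw [hu2, hξ]
      have hTne : ((T k : ℝ) : ℂ) ≠ 0 := by
        exact_mod_cast (hTpos k).ne'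
      push_cast
      field_simp
      ring
    have hTatTop : Tendsto T atTop atTop := by
      apply tendsto_atTop_mono hT1
      apply tendsto_atTop_add_const_right
      exact tendsto_natCast_atTop_atTop
    have hinv : Tendsto (fun k => (T k)⁻¹) atTop (nhds 0) :=
      tendsto_inv_atTop_zero.comp hTatTop
    have hinvC : Tendsto (fun k => (((T k)⁻¹ : ℝ) : ℂ)) atTop (nhds ((0:ℝ) : ℂ)) :=
      (Complex.continuous_ofReal.tendsto (0:ℝ)).comp hinv
    have hu2ten : ∀ i, Tendsto (fun k => u2 k i) atTop (nhds ((fun _ => (1:ℂ)) i)) := by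
      intro i
      rw [hu2]
      have h3 : Tendsto (fun k => 1 + (lam i : ℂ) * (((T k)⁻¹ : ℝ) : ℂ)) atTop
          (nhds (1 + (lam i : ℂ) * ((0:ℝ) : ℂ))) :=
        tendsto_const_nhds.add (tendsto_const_nhds.mul hinvC)
      simpa using h3
    have hones : esC n m (fun _ => (1:ℂ)) ≠ 0 := by
      rw [esC_ones hmn]
      exact_mod_cast (Nat.choose_pos hmn).ne'
    obtain ⟨φ, ξ', hφ, hξten, hξroot⟩ := roots_compactness hm (fun _ => (fun i => (mu i : ℂ)))
      u2 (fun i => (mu i : ℂ)) (fun _ => (1:ℂ))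
      (fun i => tendsto_const_nhds) hu2ten hones ξ hroot3
    have hξ're : 0 ≤ ξ'.re := by
      apply ge_of_tendsto' ((Complex.continuous_re.tendsto ξ').comp hξten)
      intro k
      show 0 ≤ (ξ (φ k)).re
      rw [hξ]
      show 0 ≤ (((T (φ k) : ℝ) : ℂ) * ζs (φ k)).re
      rw [Complex.mul_re]
      simp only [Complex.ofReal_re, Complex.ofReal_im, zero_mul, sub_zero]
      exact mul_nonneg (hTpos _).le (hre2 _)
    -- the limit root gives a contradiction
    by_cases him : ξ'.im = 0
    · -- ξ' is a nonnegative real, contradicting positivity of shifted esymm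
      have hξeq : ξ' = ((ξ'.re : ℝ) : ℂ) := by
        apply Complex.ext
        · simp
        · simp [him]
      have hQval : Qc n m (fun i => (mu i : ℂ)) (fun _ => (1:ℂ)) ξ'
          = ((esymmS n m (fun i => mu i + ξ'.re) : ℝ) : ℂ) := by
        rw [hξeq]
        unfold Qc esymmS
        push_cast
        refine Finset.sum_congr rfl fun s _ => Finset.prod_congr rfl fun i _ => ?_
        simp
      rw [hQval] at hξroot
      have h5 : esymmS n m (fun i => mu i + ξ'.re) = 0 := by exact_mod_cast hξroot
      have hpos := esymm_shift_pos mu hmu hmn m le_rfl ξ'.re hξ're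
      linarith
    · -- nonreal root of shifted polynomial in direction e: contradicts fact1
      apply fact1 hm hmn mu ξ' him
      rw [← hξroot]
      unfold Qc
      refine Finset.sum_congr rfl fun s _ => Finset.prod_congr rfl fun i _ => ?_
      ring
  -- main argument via the supremum
  intro T hT ζ hroot
  by_contra hfin
  push_neg at hfin
  set Bad : Set ℝ := {T' | 0 ≤ T' ∧ ∃ ζ',
      Qc n m (fun i => (mu i : ℂ)) (Uf lam T') ζ' = 0 ∧ 0 ≤ ζ'.re} with hBad
  have hne : Bad.Nonempty := ⟨T, hT, ζ, hroot, hfin⟩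
  obtain ⟨M, hM⟩ := hlarge
  have hbdd : BddAbove Bad := by
    refine ⟨M, fun T' hT' => ?_⟩
    by_contra hgt
    push_neg at hgt
    obtain ⟨-, ζ', h0, hre⟩ := hT'
    exact absurd (hM T' hgt.le ζ' h0) (not_lt.mpr hre)
  set β := sSup Bad with hβ
  have hβ0 : 0 ≤ β := by
    obtain ⟨T₀, hT₀⟩ := hne
    exact le_trans hT₀.1 (le_csSup hbdd hT₀)
  have hβBad : β ∈ Bad := by
    have hseq : ∀ k : ℕ, ∃ T', T' ∈ Bad ∧ β - 1/(k+1) < T' ∧ T' ≤ β := by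
      intro k
      have hlt : β - 1/(k+1) < β := by
        have : (0:ℝ) < 1/(k+1) := by positivity
        linarith
      obtain ⟨T', hT', hgt⟩ := exists_lt_of_lt_csSup hne hlt
      exact ⟨T', hT', hgt, le_csSup hbdd hT'⟩
    choose Ts hTs hTgt hTle using hseq
    have hTten : Tendsto Ts atTop (nhds β) := by
      have hlow : Tendsto (fun k : ℕ => β - 1/(k+1 : ℝ)) atTop (nhds (β - 0)) :=
        tendsto_const_nhds.sub tendsto_one_div_add_atTop_nhds_zero_nat
      rw [sub_zero] at hlow
      exact tendsto_of_tendsto_of_tendsto_of_le_of_le hlow tendsto_const_nhds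
        (fun k => (hTgt k).le) hTle
    choose ζs hζ0 hζre using fun k => (hTs k).2
    obtain ⟨φ, ζ', hφ, hζten, hζroot⟩ := roots_compactness hm
      (fun _ => (fun i => (mu i : ℂ))) (fun k => Uf lam (Ts k))
      (fun i => (mu i : ℂ)) (Uf lam β) (fun i => tendsto_const_nhds) (tendsto_Uf lam hTten)
      (esC_Uf_ne hm hmn lam hlam β hβ0) ζs hζ0
    refine ⟨hβ0, ζ', hζroot, ?_⟩
    apply ge_of_tendsto' ((Complex.continuous_re.tendsto ζ').comp hζten)
    intro k
    exact hζre (φ k)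
  obtain ⟨-, ζ₀, hζ₀, hζ₀re⟩ := hβBad
  have hβk : ∀ k : ℕ, (0:ℝ) ≤ β + 1/(k+1) := by
    intro k
    have : (0:ℝ) < 1/(k+1) := by positivity
    linarith
  have hfac0 : ∀ k : ℕ, ∃ zz : Fin m → ℂ, ∀ ζ' : ℂ,
      Qc n m (fun i => (mu i : ℂ)) (Uf lam (β + 1/(k+1))) ζ'
        = esC n m (Uf lam (β + 1/(k+1))) * ∏ i, (ζ' - zz i) :=
    fun k => exists_roots hm _ _ (esC_Uf_ne hm hmn lam hlam _ (hβk k))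
  choose zz hzz using hfac0
  have hznotin : ∀ k : ℕ, (β + 1/(k+1)) ∉ Bad := by
    intro k hmem
    have hle := le_csSup hbdd hmem
    have : (0:ℝ) < 1/(k+1) := by positivity
    rw [← hβ] at hle
    linarith
  have hzneg : ∀ k i, (zz k i).re < 0 := by
    intro k i
    have hrootz : Qc n m (fun i => (mu i : ℂ)) (Uf lam (β + 1/(k+1))) (zz k i) = 0 := by
      rw [hzz k (zz k i), Finset.prod_eq_zero (Finset.mem_univ i) (by ring), mul_zero]
    by_contra hge
    push_neg at hge
    exact hznotin k ⟨hβk k, zz k i, hrootz, hge⟩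
  have hTten2 : Tendsto (fun k : ℕ => β + 1/(k+1 : ℝ)) atTop (nhds β) := by
    have h4 : Tendsto (fun k : ℕ => β + 1/(k+1 : ℝ)) atTop (nhds (β + 0)) :=
      tendsto_const_nhds.add tendsto_one_div_add_atTop_nhds_zero_nat
    rwa [add_zero] at h4
  obtain ⟨φ, z', hφ, hzten, hfac'⟩ := factorization_limit hm
    (fun _ => (fun i => (mu i : ℂ))) (fun k => Uf lam (β + 1/(k+1)))
    (fun i => (mu i : ℂ)) (Uf lam β) (fun i => tendsto_const_nhds)
    (tendsto_Uf lam hTten2) (esC_Uf_ne hm hmn lam hlam β hβ0) zz (fun k => hzz k)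
  have hre' : ∀ i, (z' i).re ≤ 0 := by
    intro i
    apply le_of_tendsto' ((Complex.continuous_re.tendsto (z' i)).comp (hzten i))
    intro k
    exact (hzneg (φ k) i).le
  have h0 : esC n m (Uf lam β) * ∏ i, (ζ₀ - z' i) = 0 := by rw [← hfac' ζ₀, hζ₀]
  have hprod0 : ∏ i, (ζ₀ - z' i) = 0 :=
    (mul_eq_zero.mp h0).resolve_left (esC_Uf_ne hm hmn lam hlam β hβ0)
  obtain ⟨i, -, hi⟩ := Finset.prod_eq_zero_iff.mp hprod0
  have hζz : ζ₀ = z' i := by linear_combination hi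
  have hre0 : ζ₀.re = 0 := le_antisymm (hζz ▸ hre' i) hζ₀re
  exact hexcl β hβ0 ζ₀ hζ₀ hre0

/-- Stage C: negative real roots, as a real factorization -/
lemma stageC (hm : 1 ≤ m) (hmn : m ≤ n) (lam mu : Fin n → ℝ)
    (hlam : GammaCone n m lam) (hmu : GammaCone n m mu) :
    ∃ r : Fin m → ℝ, (∀ i, r i < 0) ∧ ∀ s : ℝ,
      esymmS n m (fun i => mu i + s * lam i) = esymmS n m lam * ∏ i, (s - r i) := by
  obtain ⟨r, hr⟩ := stageB hm hmn lam mu hlam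
  have hneg : ∀ i, r i < 0 := by
    intro i
    have hrooti : Qc n m (fun i => (mu i : ℂ)) (fun i => (lam i : ℂ)) ((r i : ℝ) : ℂ) = 0 := by
      rw [hr, Finset.prod_eq_zero (Finset.mem_univ i) (by ring), mul_zero]
    have h2 := stageC_aux hm hmn lam mu hlam hmu 0 le_rfl ((r i : ℝ) : ℂ)
    rw [Uf_zero lam] at h2
    have := h2 hrooti
    simpa using this
  refine ⟨r, hneg, fun s => ?_⟩
  have hC := hr ((s : ℝ) : ℂ)
  have hL : Qc n m (fun i => (mu i : ℂ)) (fun i => (lam i : ℂ)) ((s : ℝ) : ℂ)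
      = ((esymmS n m (fun i => mu i + s * lam i) : ℝ) : ℂ) := by
    unfold Qc esymmS
    push_cast
    refine Finset.sum_congr rfl fun t _ => Finset.prod_congr rfl fun i _ => ?_
    ring
  have hR : esC n m (fun i => (lam i : ℂ)) * ∏ i, (((s : ℝ) : ℂ) - ((r i : ℝ) : ℂ))
      = ((esymmS n m lam * ∏ i, (s - r i) : ℝ) : ℂ) := by
    rw [esC_real m lam]
    push_cast
    ring
  rw [hL, hR] at hC
  exact_mod_cast hC


lemma esymmS_smul (c : ℝ) (k : ℕ) (x : Fin n → ℝ) :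
    esymmS n k (fun i => c * x i) = c ^ k * esymmS n k x := by
  unfold esymmS
  rw [Finset.mul_sum]
  refine Finset.sum_congr rfl fun s hs => ?_
  rw [Finset.prod_mul_distrib, Finset.prod_const, Finset.mem_powersetCard_univ.mp hs]

lemma amgm (hm : 1 ≤ m) (t : Fin m → ℝ) (ht : ∀ i, 0 < t i) :
    1 + (∏ i, t i) ^ ((1:ℝ)/m) ≤ (∏ i, (1 + t i)) ^ ((1:ℝ)/m) := by
  have hmR : (0:ℝ) < m := by exact_mod_cast hm
  set r : ℝ := 1/m with hr
  have hrpos : 0 < r := by positivity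
  have hP : 0 < ∏ i, (1 + t i) := Finset.prod_pos fun i _ => by linarith [ht i]
  have hQ : 0 < ∏ i, t i := Finset.prod_pos fun i _ => ht i
  have hsum : ∑ _i : Fin m, r = 1 := by
    rw [Finset.sum_const, Finset.card_univ, Fintype.card_fin, nsmul_eq_mul, hr]
    field_simp
  have h1 := Real.geom_mean_le_arith_mean_weighted Finset.univ (fun _ => r)
    (fun i => 1/(1 + t i)) (fun i _ => hrpos.le) hsum
    (fun i _ => by have := ht i; positivity)
  have h2 := Real.geom_mean_le_arith_mean_weighted Finset.univ (fun _ => r)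
    (fun i => t i/(1 + t i)) (fun i _ => hrpos.le) hsum
    (fun i _ => by have := ht i; positivity)
  have hadd : (∑ i : Fin m, r * (1/(1 + t i))) + (∑ i : Fin m, r * (t i/(1 + t i))) = 1 := by
    rw [← Finset.sum_add_distrib]
    have : ∀ i : Fin m, r * (1/(1 + t i)) + r * (t i/(1 + t i)) = r := by
      intro i
      have h1t : (1 + t i) ≠ 0 := by have := ht i; positivity
      field_simp
    rw [Finset.sum_congr rfl fun i _ => this i, hsum]
  have hp1 : ∏ i : Fin m, (1/(1 + t i)) ^ r = (1/(∏ i, (1 + t i))) ^ r := by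
    rw [Real.finset_prod_rpow _ _ (fun i _ => by have := ht i; positivity) r]
    congr 1
    rw [Finset.prod_div_distrib, Finset.prod_const_one]
  have hp2 : ∏ i : Fin m, (t i/(1 + t i)) ^ r = ((∏ i, t i)/(∏ i, (1 + t i))) ^ r := by
    rw [Real.finset_prod_rpow _ _ (fun i _ => by have := ht i; positivity) r]
    congr 1
    rw [Finset.prod_div_distrib]
  rw [hp1] at h1
  rw [hp2] at h2
  have hkey : (1/(∏ i, (1 + t i))) ^ r + ((∏ i, t i)/(∏ i, (1 + t i))) ^ r ≤ 1 := by
    calc (1/(∏ i, (1 + t i))) ^ r + ((∏ i, t i)/(∏ i, (1 + t i))) ^ r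
        ≤ (∑ i : Fin m, r * (1/(1 + t i))) + (∑ i : Fin m, r * (t i/(1 + t i))) :=
          add_le_add h1 h2
      _ = 1 := hadd
  rw [Real.div_rpow zero_le_one hP.le, Real.div_rpow hQ.le hP.le, Real.one_rpow] at hkey
  have hPr : 0 < (∏ i, (1 + t i)) ^ r := Real.rpow_pos_of_pos hP r
  have hQr : 0 ≤ (∏ i, t i) ^ r := Real.rpow_nonneg hQ.le r
  rw [← add_div, div_le_one hPr] at hkey
  linarith

lemma superadd (hm : 1 ≤ m) (hmn : m ≤ n) (lam mu : Fin n → ℝ)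
    (hlam : GammaCone n m lam) (hmu : GammaCone n m mu) :
    esymmS n m lam ^ ((1:ℝ)/m) + esymmS n m mu ^ ((1:ℝ)/m)
      ≤ esymmS n m (fun i => lam i + mu i) ^ ((1:ℝ)/m) := by
  obtain ⟨rr, hneg, hfac⟩ := stageC hm hmn lam mu hlam hmu
  set t : Fin m → ℝ := fun i => -rr i with htdef
  have ht : ∀ i, 0 < t i := fun i => by simp [htdef]; exact hneg i
  have h0 := hfac 0
  have h1 := hfac 1
  have e0 : (fun i => mu i + 0 * lam i) = mu := funext fun i => by ring
  have e1 : (fun i => mu i + 1 * lam i) = (fun i => lam i + mu i) := funext fun i => by ring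
  rw [e0] at h0
  rw [e1] at h1
  have hprod0 : ∏ i, ((0:ℝ) - rr i) = ∏ i, t i :=
    Finset.prod_congr rfl fun i _ => by rw [htdef]; ring
  have hprod1 : ∏ i, ((1:ℝ) - rr i) = ∏ i, (1 + t i) :=
    Finset.prod_congr rfl fun i _ => by rw [htdef]; ring
  rw [hprod0] at h0
  rw [hprod1] at h1
  have hL : 0 < esymmS n m lam := hlam m hm le_rfl
  have hQ : 0 < ∏ i, t i := Finset.prod_pos fun i _ => ht i
  have hP : 0 < ∏ i, (1 + t i) := Finset.prod_pos fun i _ => by linarith [ht i]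
  rw [h0, h1]
  rw [Real.mul_rpow hL.le hQ.le, Real.mul_rpow hL.le hP.le]
  have hLr : 0 < esymmS n m lam ^ ((1:ℝ)/m) := Real.rpow_pos_of_pos hL _
  have hkey := amgm hm t ht
  calc esymmS n m lam ^ ((1:ℝ)/m) + esymmS n m lam ^ ((1:ℝ)/m) * (∏ i, t i) ^ ((1:ℝ)/m)
      = esymmS n m lam ^ ((1:ℝ)/m) * (1 + (∏ i, t i) ^ ((1:ℝ)/m)) := by ring
    _ ≤ esymmS n m lam ^ ((1:ℝ)/m) * (∏ i, (1 + t i)) ^ ((1:ℝ)/m) := by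
        exact mul_le_mul_of_nonneg_left hkey hLr.le

lemma Gamma_smul (c : ℝ) (hc : 0 < c) (lam : Fin n → ℝ) (hlam : GammaCone n m lam) :
    GammaCone n m (fun i => c * lam i) := by
  intro j hj1 hj2
  rw [esymmS_smul]
  have := hlam j hj1 hj2
  positivity


end Gard

/-- Concavity of S_m^{1/m} on the Gårding cone. -/
theorem esymm_rpow_concave (n m : ℕ) (hm : 1 ≤ m) (hmn : m ≤ n)
    (lam mu : Fin n → ℝ) (hlam : GammaCone n m lam) (hmu : GammaCone n m mu)
    (t : ℝ) (ht0 : 0 ≤ t) (ht1 : t ≤ 1) :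
    t * esymmS n m lam ^ ((1 : ℝ) / (m : ℝ)) + (1 - t) * esymmS n m mu ^ ((1 : ℝ) / (m : ℝ)) ≤
      esymmS n m (fun i => t * lam i + (1 - t) * mu i) ^ ((1 : ℝ) / (m : ℝ)) := by
  rcases eq_or_lt_of_le ht0 with h0 | h0
  · have e : (fun i => t * lam i + (1 - t) * mu i) = mu := by
      funext i; rw [← h0]; ring
    rw [e, ← h0]
    simp
  rcases eq_or_lt_of_le ht1 with h1 | h1
  · have e : (fun i => t * lam i + (1 - t) * mu i) = lam := by
      funext i; rw [h1]; ring
    rw [e, h1]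
    simp
  · have hlam' : GammaCone n m (fun i => t * lam i) := Gard.Gamma_smul t h0 lam hlam
    have hmu' : GammaCone n m (fun i => (1-t) * mu i) :=
      Gard.Gamma_smul (1-t) (by linarith) mu hmu
    have key := Gard.superadd hm hmn (fun i => t * lam i) (fun i => (1-t) * mu i) hlam' hmu'
    have hs1 : esymmS n m (fun i => t * lam i) = t^m * esymmS n m lam :=
      Gard.esymmS_smul t m lam
    have hs2 : esymmS n m (fun i => (1-t) * mu i) = (1-t)^m * esymmS n m mu :=
      Gard.esymmS_smul (1-t) m mu
    rw [hs1, hs2] at key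
    have hmne : (m:ℝ) ≠ 0 := by positivity
    have hpowr : ∀ c X : ℝ, 0 < c → 0 ≤ X → (c^m * X) ^ ((1:ℝ)/m) = c * X ^ ((1:ℝ)/m) := by
      intro c X hc hX
      rw [Real.mul_rpow (by positivity) hX]
      congr 1
      rw [← Real.rpow_natCast c m, ← Real.rpow_mul hc.le]
      rw [mul_one_div, div_self hmne, Real.rpow_one]
    have hLpos : 0 < esymmS n m lam := hlam m hm le_rfl
    have hMpos : 0 < esymmS n m mu := hmu m hm le_rfl
    rw [hpowr t _ h0 hLpos.le, hpowr (1-t) _ (by linarith) hMpos.le] at key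
    exact key
end
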